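/- arXiv:2110.12036 — 4 statements merged into one kernel-verified Lean document; each statement's English description precedes it below -/
import Mathlib

section
/- In any MAG G that contains at least one directed or bidirected edge, there exists a vertex X with an arrowhead incident to it (at least one parent or spouse) such that X has no proper descendants; any such X has no children and no neighbors, and is removable in G. -/
/-- A mixed graph with directed (`dir x y` : x → y), bidirected and undirected edges. -/
structure MixedGraph (V : Type*) where
  dir : V → V → Prop
  bi : V → V → Prop
  und : V → V → Prop
  bi_symm : ∀ x y, bi x y → bi y x
  und_symm : ∀ x y, und x y → und y x

namespace MixedGraph

variable {V : Type*}

def adj (G : MixedGraph V) (x y : V) : Prop :=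
  G.dir x y ∨ G.dir y x ∨ G.bi x y ∨ G.und x y

/-- There is an arrowhead at `y` on the edge between `x` and `y`. -/
def head (G : MixedGraph V) (x y : V) : Prop := G.dir x y ∨ G.bi x y

def pa (G : MixedGraph V) (x : V) : Set V := {y | G.dir y x}
def child (G : MixedGraph V) (x : V) : Set V := {y | G.dir x y}
def nbr (G : MixedGraph V) (x : V) : Set V := {y | G.und x y}
def spouse (G : MixedGraph V) (x : V) : Set V := {y | G.bi x y}

/-- `x` is an ancestor of `y` (every vertex is an ancestor of itself). -/
def anc (G : MixedGraph V) (x y : V) : Prop := Relation.ReflTransGen G.dir x y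

def ancSet (G : MixedGraph V) (S : Set V) : Set V := {x | ∃ y ∈ S, G.anc x y}

/-- The set of descendants of `x` (including `x` itself). -/
def desc (G : MixedGraph V) (x : V) : Set V := {y | G.anc x y}

/-- A path, encoded as a duplicate-free list of at least two vertices with
consecutive vertices adjacent. -/
def IsPath (G : MixedGraph V) (p : List V) : Prop :=
  p.Chain' G.adj ∧ p.Nodup ∧ 2 ≤ p.length

def IsPathBetween (G : MixedGraph V) (p : List V) (x y : V) : Prop :=
  G.IsPath p ∧ p.head? = some x ∧ p.getLast? = some y

/-- The vertex at (internal) position `i` of `p` is a collider: both incident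
path edges have an arrowhead at it. -/
def ColliderAt (G : MixedGraph V) (p : List V) (i : ℕ) : Prop :=
  ∃ a v c, p[i-1]? = some a ∧ p[i]? = some v ∧ p[i+1]? = some c ∧
    G.head a v ∧ G.head c v

/-- A collider path: every non-endpoint vertex is a collider. -/
def IsColliderPath (G : MixedGraph V) (p : List V) : Prop :=
  G.IsPath p ∧ ∀ i, 1 ≤ i → i + 1 < p.length → G.ColliderAt p i

/-- `p` is an m-connecting path between `x` and `y` relative to `Z`. -/
def MConn (G : MixedGraph V) (p : List V) (x y : V) (Z : Set V) : Prop :=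
  G.IsPathBetween p x y ∧
  ∀ i v, 1 ≤ i → i + 1 < p.length → p[i]? = some v →
    (G.ColliderAt p i → v ∈ G.ancSet ({x, y} ∪ Z)) ∧
    (¬ G.ColliderAt p i → v ∉ Z)

/-- `Z` m-separates `x` and `y` in `G`. -/
def MSep (G : MixedGraph V) (x y : V) (Z : Set V) : Prop :=
  ∀ p, ¬ G.MConn p x y Z

/-- Induced subgraph over a set `S` of vertices. -/
def induce (G : MixedGraph V) (S : Set V) : MixedGraph V where
  dir x y := G.dir x y ∧ x ∈ S ∧ y ∈ S
  bi x y := G.bi x y ∧ x ∈ S ∧ y ∈ S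
  und x y := G.und x y ∧ x ∈ S ∧ y ∈ S
  bi_symm := fun x y h => ⟨G.bi_symm x y h.1, h.2.2, h.2.1⟩
  und_symm := fun x y h => ⟨G.und_symm x y h.1, h.2.2, h.2.1⟩

/-- `X` is removable in `G`: the induced subgraph on the remaining vertices
imposes exactly the same m-separation relations over them as `G`. -/
def Removable (G : MixedGraph V) (X : V) : Prop :=
  ∀ Y W : V, Y ≠ X → W ≠ X → Y ≠ W →
    ∀ Z : Set V, Z ⊆ {v | v ≠ X ∧ v ≠ Y ∧ v ≠ W} →
      (G.MSep Y W Z ↔ (G.induce {v | v ≠ X}).MSep Y W Z)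

/-- Ancestral: no directed cycles, no almost directed cycles, and endpoints of
undirected edges have no parents or spouses. -/
def Ancestral (G : MixedGraph V) : Prop :=
  (∀ x y, G.dir x y → ¬ G.anc y x) ∧
  (∀ x y, G.bi x y → ¬ G.anc y x) ∧
  (∀ x y, G.und x y → ∀ z, ¬ G.dir z x ∧ ¬ G.bi z x)

/-- A maximal ancestral graph: ancestral, and any two non-adjacent vertices are
m-separated by some set. -/
def IsMAG (G : MixedGraph V) : Prop :=
  G.Ancestral ∧
  ∀ x y, x ≠ y → ¬ G.adj x y →
    ∃ Z : Set V, Z ⊆ {v | v ≠ x ∧ v ≠ y} ∧ G.MSep x y Z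

/-- Markov boundary of `x`: the vertices with a collider path to `x`. -/
def Mb (G : MixedGraph V) (x : V) : Set V :=
  {y | ∃ p, G.IsColliderPath p ∧ p.head? = some y ∧ p.getLast? = some x}

/-- District of `x`: vertices joined to `x` by a path of bidirected edges. -/
def district (G : MixedGraph V) (x : V) : Set V :=
  {y | Relation.ReflTransGen G.bi x y}

/-- `Pa⁺(x) = Pa(x) ∪ Dis(x) ∪ Pa(Dis(x)) ∪ N(x)`. -/
def paPlus (G : MixedGraph V) (x : V) : Set V :=
  G.pa x ∪ G.district x ∪ (⋃ y ∈ G.district x, G.pa y) ∪ G.nbr x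

noncomputable def deltaPlus [Fintype V] (G : MixedGraph V) : ℕ :=
  Finset.univ.sup fun z : V => (G.paPlus z).ncard

/-- Condition 1 of the graphical characterization of removability. -/
def RemCond1 (G : MixedGraph V) (X : V) : Prop :=
  ∀ Y Z : V, G.adj X Y → Z ∈ G.child X ∪ G.nbr X → Z ≠ Y → G.adj Y Z

/-- Condition 2 of the graphical characterization of removability. -/
def RemCond2 (G : MixedGraph V) (X : V) : Prop :=
  ∀ (p : List V) (Y Z : V), G.IsColliderPath p → p.head? = some X →
    p.getLast? = some Y → Z ∉ p → (∀ v ∈ p.dropLast, G.dir v Z) → G.adj Y Z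

end MixedGraph


section Helpers

open MixedGraph

variable {V : Type*}

private lemma mem_of_getElem?' {α} {l : List α} {n : ℕ} {a : α} (h : l[n]? = some a) :
    a ∈ l := by
  have hn : n < l.length := by
    by_contra hc
    rw [List.getElem?_eq_none (by omega)] at h; simp at h
  rw [List.getElem?_eq_getElem hn] at h
  have := Option.some.inj h
  subst this
  exact l.getElem_mem hn

private lemma chain'_getElem? {α} {R : α → α → Prop} {p : List α} (h : p.Chain' R)
    {i : ℕ} {a b : α} (ha : p[i]? = some a) (hb : p[i+1]? = some b) : R a b := by
  have hib : i + 1 < p.length := by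
    by_contra hc
    rw [List.getElem?_eq_none (by omega)] at hb; simp at hb
  have hia : i < p.length := by omega
  rw [List.getElem?_eq_getElem hia] at ha
  rw [List.getElem?_eq_getElem hib] at hb
  have := List.isChain_iff_getElem.mp h i (by omega)
  simpa [List.get_eq_getElem, Option.some.inj ha, Option.some.inj hb] using this

private lemma chain'_strengthen {α} {R S : α → α → Prop} {p : List α} (h : p.Chain' R)
    (hm : ∀ a b, a ∈ p → b ∈ p → R a b → S a b) : p.Chain' S := by
  rw [List.Chain', List.isChain_iff_getElem] at h ⊢
  intro i hi
  exact hm _ _ (List.getElem_mem _) (List.getElem_mem _) (h i hi)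

private lemma adj_of_induce {G : MixedGraph V} {S : Set V} {x y : V}
    (h : (G.induce S).adj x y) : G.adj x y ∧ x ∈ S ∧ y ∈ S := by
  rcases h with h | h | h | h
  · exact ⟨Or.inl h.1, h.2⟩
  · exact ⟨Or.inr (Or.inl h.1), h.2.2, h.2.1⟩
  · exact ⟨Or.inr (Or.inr (Or.inl h.1)), h.2⟩
  · exact ⟨Or.inr (Or.inr (Or.inr h.1)), h.2⟩

private lemma head_of_induce {G : MixedGraph V} {S : Set V} {x y : V}
    (h : (G.induce S).head x y) : G.head x y := by
  rcases h with h | h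
  · exact Or.inl h.1
  · exact Or.inr h.1

private lemma head_to_induce {G : MixedGraph V} {S : Set V} {x y : V}
    (h : G.head x y) (hx : x ∈ S) (hy : y ∈ S) : (G.induce S).head x y := by
  rcases h with h | h
  · exact Or.inl ⟨h, hx, hy⟩
  · exact Or.inr ⟨h, hx, hy⟩

private lemma anc_of_induce {G : MixedGraph V} {S : Set V} {x y : V}
    (h : (G.induce S).anc x y) : G.anc x y :=
  Relation.ReflTransGen.mono (fun _ _ (hd : (G.induce S).dir _ _) => hd.1) _ _ h

private lemma colliderAt_of_induce {G : MixedGraph V} {S : Set V} {p : List V} {i : ℕ}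
    (h : (G.induce S).ColliderAt p i) : G.ColliderAt p i := by
  obtain ⟨a, v, c, ha, hv, hc, h1, h2⟩ := h
  exact ⟨a, v, c, ha, hv, hc, head_of_induce h1, head_of_induce h2⟩

private lemma colliderAt_to_induce {G : MixedGraph V} {S : Set V} {p : List V} {i : ℕ}
    (hmem : ∀ v ∈ p, v ∈ S) (h : G.ColliderAt p i) : (G.induce S).ColliderAt p i := by
  obtain ⟨a, v, c, ha, hv, hc, h1, h2⟩ := h
  exact ⟨a, v, c, ha, hv, hc,
    head_to_induce h1 (hmem _ (mem_of_getElem?' ha)) (hmem _ (mem_of_getElem?' hv)),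
    head_to_induce h2 (hmem _ (mem_of_getElem?' hc)) (hmem _ (mem_of_getElem?' hv))⟩

/-- m-connection in an induced subgraph yields m-connection in the original graph. -/
private lemma mconn_of_induce {G : MixedGraph V} {S : Set V} {p : List V} {x y : V} {Z : Set V}
    (h : (G.induce S).MConn p x y Z) : G.MConn p x y Z := by
  obtain ⟨⟨⟨hch, hnd, hlen⟩, hhd, hlast⟩, hcond⟩ := h
  have hmem : ∀ v ∈ p, v ∈ S := by
    intro v hv
    obtain ⟨i, hi, rfl⟩ := List.mem_iff_getElem.mp hv
    rcases Nat.lt_or_ge (i+1) p.length with h' | h'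
    · exact (adj_of_induce (chain'_getElem? hch (List.getElem?_eq_getElem hi)
        (List.getElem?_eq_getElem h'))).2.1
    · have hi1 : 1 ≤ i := by omega
      have heq : i - 1 + 1 = i := by omega
      have hE : p[i-1+1]? = some p[i] := by
        rw [heq]; exact List.getElem?_eq_getElem hi
      exact (adj_of_induce (chain'_getElem? hch
        (List.getElem?_eq_getElem (show i - 1 < p.length by omega)) hE)).2.2
  refine ⟨⟨⟨chain'_strengthen hch (fun a b _ _ hab => (adj_of_induce hab).1), hnd, hlen⟩,
    hhd, hlast⟩, ?_⟩
  intro i v h1 h2 hv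
  obtain ⟨hcoll, hncoll⟩ := hcond i v h1 h2 hv
  constructor
  · intro hc
    obtain ⟨w, hw, hanc⟩ := hcoll (colliderAt_to_induce hmem hc)
    exact ⟨w, hw, anc_of_induce hanc⟩
  · intro hc
    exact hncoll (fun hc' => hc (colliderAt_of_induce hc'))

end Helpers

open MixedGraph in
/-- in a MAG with at least one directed or bidirected edge,
there is a vertex `X` with an arrowhead incident to it and no proper
descendants; any such `X` has no children, no neighbors, and is removable. -/
theorem stmt11 {V : Type*} [Fintype V] (G : MixedGraph V) (hG : G.IsMAG)
    (hedge : ∃ x y : V, G.dir x y ∨ G.bi x y) :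
    (∃ X : V, (∃ p : V, G.dir p X ∨ G.bi p X) ∧ (∀ y : V, G.anc X y → y = X)) ∧
    ∀ X : V, (∃ p : V, G.dir p X ∨ G.bi p X) → (∀ y : V, G.anc X y → y = X) →
      G.child X = ∅ ∧ G.nbr X = ∅ ∧ G.Removable X := by
  classical
  obtain ⟨hanc, hmax⟩ := hG
  obtain ⟨hdirA, hbiA, hundA⟩ := hanc
  constructor
  · -- existence
    obtain ⟨a, b, hab⟩ := hedge
    have hbT : b ∈ Set.toFinset {y | G.anc b y} := by
      rw [Set.mem_toFinset]
      exact Relation.ReflTransGen.refl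
    obtain ⟨X, hXT, hmin⟩ := Finset.exists_min_image
      (Set.toFinset {y | G.anc b y}) (fun z => (G.desc z).ncard) ⟨b, hbT⟩
    rw [Set.mem_toFinset] at hXT
    have hsink : ∀ y : V, G.anc X y → y = X := by
      intro y hy
      by_contra hne
      rcases Relation.ReflTransGen.cases_head hy with rfl | ⟨c, hXc, _⟩
      · exact hne rfl
      · have hsub : G.desc c ⊂ G.desc X := by
          constructor
          · intro z hz
            exact Relation.ReflTransGen.head hXc hz
          · intro hcon
            have hXX : X ∈ G.desc X := Relation.ReflTransGen.refl
            exact hdirA X c hXc (hcon hXX)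
        have hlt : (G.desc c).ncard < (G.desc X).ncard :=
          Set.ncard_lt_ncard hsub (Set.toFinite _)
        have hcT : c ∈ Set.toFinset {y | G.anc b y} := by
          rw [Set.mem_toFinset]
          exact Relation.ReflTransGen.tail hXT hXc
        exact absurd (hmin c hcT) (by omega)
    refine ⟨X, ?_, hsink⟩
    rcases Relation.ReflTransGen.cases_tail hXT with rfl | ⟨c, _, hcX⟩
    · exact ⟨a, hab⟩
    · exact ⟨c, Or.inl hcX⟩
  · -- any such X works
    intro X ⟨par, hpar⟩ hnd
    have hch : ∀ y : V, ¬ G.dir X y := by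
      intro y hy
      have hyX : y = X := hnd y (Relation.ReflTransGen.single hy)
      exact hdirA X y hy (hyX ▸ Relation.ReflTransGen.refl)
    have hnb : ∀ y : V, ¬ G.und X y := by
      intro y hy
      rcases hpar with hp | hp
      · exact (hundA X y hy par).1 hp
      · exact (hundA X y hy par).2 hp
    refine ⟨Set.eq_empty_iff_forall_notMem.mpr hch,
      Set.eq_empty_iff_forall_notMem.mpr hnb, ?_⟩
    intro Y W hY hW hYW Z hZ
    set S : Set V := {v | v ≠ X} with hS
    -- key: any G-m-connecting path between Y and W avoids X
    have key : ∀ p : List V, G.MConn p Y W Z → X ∉ p := by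
      intro p hp hv
      obtain ⟨⟨⟨hchn, hndp, hlen⟩, hhd, hlast⟩, hcond⟩ := hp
      obtain ⟨i, hi, hiX⟩ := List.mem_iff_getElem.mp hv
      have h0 : p[0]? = some Y := by
        rw [← List.head?_eq_getElem?]; exact hhd
      have hlastE : p[p.length - 1]? = some W := by
        rw [← List.getLast?_eq_getElem?]; exact hlast
      have hi0 : i ≠ 0 := by
        rintro rfl
        rw [List.getElem?_eq_getElem hi] at h0
        exact hY (by rw [← Option.some.inj h0, hiX])
      have hilast : i ≠ p.length - 1 := by
        intro h
        rw [← h, List.getElem?_eq_getElem hi] at hlastE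
        exact hW (by rw [← Option.some.inj hlastE, hiX])
      have h1 : 1 ≤ i := by omega
      have h2 : i + 1 < p.length := by omega
      have him1 : i - 1 + 1 = i := by omega
      have hvE : p[i]? = some X := by
        rw [List.getElem?_eq_getElem hi, hiX]
      have hvE' : p[i-1+1]? = some X := by rw [him1]; exact hvE
      have hadj1 : G.adj p[i-1] X :=
        chain'_getElem? hchn (List.getElem?_eq_getElem (show i - 1 < p.length by omega)) hvE'
      have hadj2 : G.adj X p[i+1] :=
        chain'_getElem? hchn hvE (List.getElem?_eq_getElem h2)
      have hhead1 : G.head p[i-1] X := by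
        rcases hadj1 with h | h | h | h
        · exact Or.inl h
        · exact absurd h (hch _)
        · exact Or.inr h
        · exact absurd (G.und_symm _ _ h) (hnb _)
      have hhead2 : G.head p[i+1] X := by
        rcases hadj2 with h | h | h | h
        · exact absurd h (hch _)
        · exact Or.inl h
        · exact Or.inr (G.bi_symm _ _ h)
        · exact absurd h (hnb _)
      have hcoll : G.ColliderAt p i :=
        ⟨p[i-1], X, p[i+1], List.getElem?_eq_getElem (show i - 1 < p.length by omega),
          hvE, List.getElem?_eq_getElem h2, hhead1, hhead2⟩
      obtain ⟨w, hw, hancw⟩ := (hcond i X h1 h2 hvE).1 hcoll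
      have hwX := hnd w hancw
      simp only [Set.mem_union, Set.mem_insert_iff, Set.mem_singleton_iff] at hw
      rcases hw with (hw | hw) | hw
      · exact hY (hw ▸ hwX)
      · exact hW (hw ▸ hwX)
      · exact (hZ hw).1 hwX
    constructor
    · -- MSep G → MSep induced
      intro hsep p hp
      exact hsep p (mconn_of_induce hp)
    · -- MSep induced → MSep G
      intro hsep p hp
      apply hsep p
      have hmem : ∀ v ∈ p, v ∈ S := fun v hv hvX => key p hp (hvX ▸ hv)
      obtain ⟨⟨⟨hchn, hndp, hlen⟩, hhd, hlast⟩, hcond⟩ := hp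
      refine ⟨⟨⟨?_, hndp, hlen⟩, hhd, hlast⟩, ?_⟩
      · refine chain'_strengthen hchn (fun a b ha hb hab => ?_)
        rcases hab with h | h | h | h
        · exact Or.inl ⟨h, hmem a ha, hmem b hb⟩
        · exact Or.inr (Or.inl ⟨h, hmem b hb, hmem a ha⟩)
        · exact Or.inr (Or.inr (Or.inl ⟨h, hmem a ha, hmem b hb⟩))
        · exact Or.inr (Or.inr (Or.inr ⟨h, hmem a ha, hmem b hb⟩))
      · intro i v h1 h2 hv
        obtain ⟨hcoll, hncoll⟩ := hcond i v h1 h2 hv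
        constructor
        · intro hc
          obtain ⟨w, hw, hancw⟩ := hcoll (colliderAt_of_induce hc)
          have hwX : w ≠ X := by
            rcases hw with hw | hw
            · rcases hw with rfl | rfl
              · exact hY
              · exact hW
            · exact (hZ hw).1
          refine ⟨w, hw, ?_⟩
          -- lift the ancestor path into the induced graph
          clear hc hcoll hncoll hv
          induction hancw using Relation.ReflTransGen.head_induction_on with
          | refl => exact Relation.ReflTransGen.refl
          | head hd tl ih =>
            rename_i a c
            have haX : a ≠ X := fun h => hch c (h ▸ hd)
            have hcX : c ≠ X := by
              intro h
              exact hwX (hnd w (h ▸ tl))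
            exact Relation.ReflTransGen.head ⟨hd, haX, hcX⟩ ih
        · intro hc
          exact hncoll (fun hc' => hc (colliderAt_to_induce hmem hc'))
end

section
/- Let G be a MAG containing a non-chordal cycle c = (O₀, O₁, …, O_m, O₀) of undirected edges, meaning consecutive vertices are neighbors and the induced subgraph on {O₀,…,O_m} contains no other edges, with m ≥ 3. Then in any induced subgraph H of G that contains the cycle c, none of the vertices O₀, …, O_m is removable. -/
section Aux

variable {V : Type*}

private lemma infix_idx {α : Type*} (a b : α) (L : List α) (h : [a, b] <:+: L) :
    ∃ i, L[i]? = some a ∧ L[i+1]? = some b := by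
  obtain ⟨s, t, hst⟩ := h
  subst hst
  refine ⟨s.length, ?_, ?_⟩ <;>
    simp [List.getElem?_append_right, List.append_assoc, List.getElem_append_right]

private lemma getElem?_some' {α : Type*} {L : List α} {i : ℕ} {v : α}
    (h : L[i]? = some v) : ∃ hi : i < L.length, L[i] = v := by
  rw [List.getElem?_eq_some_iff] at h
  exact h

end Aux

open MixedGraph in
/-- if a MAG `G` contains a chordless cycle `c` of undirected
edges of length ≥ 4 (consecutive vertices are neighbors and no other pair of
cycle vertices is adjacent), then no vertex of `c` is removable in any induced
subgraph of `G` containing the cycle. -/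
theorem stmt13 {V : Type*} (G : MixedGraph V) (hG : G.IsMAG)
    (c : List V) (hlen : 4 ≤ c.length)
    (hchain : c.Chain' G.und) (hnodup : c.Nodup)
    (hwrap : ∀ a b, c.head? = some a → c.getLast? = some b → G.und b a)
    (hchordless : ∀ a ∈ c, ∀ b ∈ c, a ≠ b → G.adj a b →
      ([a, b] <:+: c ∨ [b, a] <:+: c ∨
        (c.head? = some a ∧ c.getLast? = some b) ∨
        (c.head? = some b ∧ c.getLast? = some a))) :
    ∀ S : Set V, (∀ v ∈ c, v ∈ S) → ∀ x ∈ c, ¬ (G.induce S).Removable x := by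
  obtain ⟨L, rfl⟩ : ∃ L : List V, L = c := ⟨c, rfl⟩
  intro S hS x hx hrem
  obtain ⟨i, hi, hxi⟩ := List.mem_iff_getElem.mp hx
  subst hxi
  -- basic cycle facts
  have hchain' := List.isChain_iff_getElem.mp hchain
  have hund_step : ∀ i' (h : i' + 1 < L.length), G.und L[i'] L[i'+1] := by
    intro i' h
    simpa using hchain' i' (by omega)
  have hund_wrap : G.und (L[L.length - 1]'(by omega)) (L[0]'(by omega)) := by
    apply hwrap
    · rw [List.head?_eq_getElem?, List.getElem?_eq_getElem (by omega)]
    · rw [List.getLast?_eq_getElem?, List.getElem?_eq_getElem (by omega)]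
  have hinj : ∀ p q (hp : p < L.length) (hq : q < L.length),
      L[p] = L[q] → p = q := by
    intro p q hp hq he
    exact (List.Nodup.getElem_inj_iff hnodup).mp he
  have hadj_idx : ∀ p q (hp : p < L.length) (hq : q < L.length), p ≠ q →
      G.adj L[p] L[q] →
      (q = p + 1 ∨ p = q + 1 ∨ (p = 0 ∧ q = L.length - 1) ∨
        (q = 0 ∧ p = L.length - 1)) := by
    intro p q hp hq hne hadj
    have hne' : L[p] ≠ L[q] := fun he => hne (hinj p q hp hq he)
    rcases hchordless L[p] (List.getElem_mem hp) L[q] (List.getElem_mem hq) hne' hadj with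
      h | h | h | h
    · obtain ⟨i', h1, h2⟩ := infix_idx _ _ _ h
      obtain ⟨hi1, he1⟩ := getElem?_some' h1
      obtain ⟨hi2, he2⟩ := getElem?_some' h2
      have e1 : i' = p := hinj _ _ hi1 hp he1
      have e2 : i' + 1 = q := hinj _ _ hi2 hq he2
      omega
    · obtain ⟨i', h1, h2⟩ := infix_idx _ _ _ h
      obtain ⟨hi1, he1⟩ := getElem?_some' h1
      obtain ⟨hi2, he2⟩ := getElem?_some' h2
      have e1 : i' = q := hinj _ _ hi1 hq he1
      have e2 : i' + 1 = p := hinj _ _ hi2 hp he2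
      omega
    · obtain ⟨h1, h2⟩ := h
      rw [List.head?_eq_getElem?, List.getElem?_eq_getElem (by omega)] at h1
      rw [List.getLast?_eq_getElem?, List.getElem?_eq_getElem (by omega)] at h2
      have e1 : 0 = p := hinj _ _ (by omega) hp (by injection h1)
      have e2 : L.length - 1 = q := hinj _ _ (by omega) hq (by injection h2)
      omega
    · obtain ⟨h1, h2⟩ := h
      rw [List.head?_eq_getElem?, List.getElem?_eq_getElem (by omega)] at h1
      rw [List.getLast?_eq_getElem?, List.getElem?_eq_getElem (by omega)] at h2
      have e1 : 0 = q := hinj _ _ (by omega) hq (by injection h1)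
      have e2 : L.length - 1 = p := hinj _ _ (by omega) hp (by injection h2)
      omega
  -- choose the two cyclic neighbours of x = L[i]
  obtain ⟨j, hjlt, hjchar, hund_ji⟩ :
      ∃ j, ∃ hjlt : j < L.length, (i = j + 1 ∨ (j = L.length - 1 ∧ i = 0)) ∧
        G.und (L[j]'hjlt) L[i] := by
    rcases Nat.eq_zero_or_pos i with h0 | h0
    · subst h0
      exact ⟨L.length - 1, by omega, Or.inr ⟨rfl, rfl⟩, hund_wrap⟩
    · refine ⟨i - 1, by omega, Or.inl (by omega), ?_⟩
      have := hund_step (i - 1) (by omega)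
      simpa [Nat.sub_add_cancel h0] using this
  obtain ⟨k, hklt, hkchar, hund_ik⟩ :
      ∃ k, ∃ hklt : k < L.length, (k = i + 1 ∨ (i = L.length - 1 ∧ k = 0)) ∧
        G.und L[i] (L[k]'hklt) := by
    rcases Nat.lt_or_ge (i + 1) L.length with h0 | h0
    · exact ⟨i + 1, h0, Or.inl rfl, hund_step i h0⟩
    · refine ⟨0, by omega, Or.inr ⟨by omega, rfl⟩, ?_⟩
      have : i = L.length - 1 := by omega
      subst this
      exact hund_wrap
  have hji : j ≠ i := by omega
  have hki : k ≠ i := by omega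
  have hjk : j ≠ k := by omega
  set Y := L[j]'hjlt with hY
  set W := L[k]'hklt with hW
  have hYx : Y ≠ L[i] := fun he => hji (hinj _ _ hjlt hi he)
  have hWx : W ≠ L[i] := fun he => hki (hinj _ _ hklt hi he)
  have hYW : Y ≠ W := fun he => hjk (hinj _ _ hjlt hklt he)
  -- Y and W are non-adjacent in G
  have hnadj : ¬ G.adj Y W := by
    intro hadj
    have := hadj_idx j k hjlt hklt hjk hadj
    omega
  -- get a separating set in G
  obtain ⟨Z₀, hZ₀sub, hZ₀sep⟩ := hG.2 Y W hYW hnadj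
  -- no arrowheads at x = L[i]
  have hnohead : ∀ z, ¬ G.dir z L[i] ∧ ¬ G.bi z L[i] := hG.1.2.2 L[i] W hund_ik
  -- memberships in S
  have hxS : L[i] ∈ S := hS _ (List.getElem_mem hi)
  have hYS : Y ∈ S := hS _ (List.getElem_mem hjlt)
  have hWS : W ∈ S := hS _ (List.getElem_mem hklt)
  -- apply removability with Z = Z₀ \ {x}
  have hiff := hrem Y W hYx hWx hYW (Z₀ \ {L[i]}) (by
    intro v hv
    refine ⟨hv.2, (hZ₀sub hv.1).1, (hZ₀sub hv.1).2⟩)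
  -- left side fails: [Y, x, W] m-connects in G.induce S
  have hnotleft : ¬ (G.induce S).MSep Y W (Z₀ \ {L[i]}) := by
    intro hsep
    apply hsep [Y, L[i], W]
    refine ⟨⟨⟨?_, ?_, by simp⟩, rfl, by simp⟩, ?_⟩
    · exact List.isChain_cons_cons.mpr ⟨Or.inr (Or.inr (Or.inr ⟨hund_ji, hYS, hxS⟩)),
        List.isChain_cons_cons.mpr ⟨Or.inr (Or.inr (Or.inr ⟨hund_ik, hxS, hWS⟩)),
          List.isChain_singleton _⟩⟩
    · simp [hYx, hYW, hWx.symm]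
    · intro i' v h1 h2 hv
      have hi1 : i' = 1 := by simp at h2; omega
      subst hi1
      simp at hv
      subst hv
      constructor
      · intro hcol
        exfalso
        obtain ⟨a, v', cc, ha, hv', hc, hh1, hh2⟩ := hcol
        simp at ha hv'
        subst ha
        subst hv'
        rcases hh1 with hd | hb
        · exact (hnohead Y).1 hd.1
        · exact (hnohead Y).2 hb.1
      · intro _
        simp
  -- right side holds: Z₀ \ {x} m-separates Y, W in the subgraph without x
  have hright : ((G.induce S).induce {v | v ≠ L[i]}).MSep Y W (Z₀ \ {L[i]}) := by
    intro p hp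
    apply hZ₀sep p
    obtain ⟨⟨⟨hch, hnd, hlen2⟩, hhd, hlst⟩, hint⟩ := hp
    set H2 := (G.induce S).induce {v | v ≠ L[i]} with hH2
    have hedge : ∀ a b, H2.adj a b → G.adj a b ∧ (a ∈ S ∧ a ≠ L[i]) ∧
        (b ∈ S ∧ b ≠ L[i]) := by
      intro a b hab
      rcases hab with h | h | h | h
      · exact ⟨Or.inl h.1.1, ⟨h.1.2.1, h.2.1⟩, ⟨h.1.2.2, h.2.2⟩⟩
      · exact ⟨Or.inr (Or.inl h.1.1), ⟨h.1.2.2, h.2.2⟩, ⟨h.1.2.1, h.2.1⟩⟩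
      · exact ⟨Or.inr (Or.inr (Or.inl h.1.1)), ⟨h.1.2.1, h.2.1⟩, ⟨h.1.2.2, h.2.2⟩⟩
      · exact ⟨Or.inr (Or.inr (Or.inr h.1.1)), ⟨h.1.2.1, h.2.1⟩, ⟨h.1.2.2, h.2.2⟩⟩
    have hch' := List.isChain_iff_getElem.mp hch
    have hvert : ∀ i' (h : i' < p.length), p[i'] ∈ S ∧ p[i'] ≠ L[i] := by
      intro i' h
      rcases Nat.lt_or_ge (i' + 1) p.length with h' | h'
      · have := hedge _ _ (by simpa using hch' i' (by omega))
        exact this.2.1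
      · have h1 : 1 ≤ i' := by omega
        have := hedge _ _ (by simpa using hch' (i' - 1) (by omega))
        have h2 := this.2.2
        simpa [Nat.sub_add_cancel h1] using h2
    have hchainG : p.Chain' G.adj := by
      apply List.isChain_iff_getElem.mpr
      intro i' h
      exact (hedge _ _ (hch' i' h)).1
    have hancmono : ∀ v y, H2.anc v y → G.anc v y := by
      intro v y h
      exact Relation.ReflTransGen.mono (fun a b hab => hab.1.1) _ _ h
    refine ⟨⟨⟨hchainG, hnd, hlen2⟩, hhd, hlst⟩, ?_⟩
    intro i' v h1 h2 hv
    obtain ⟨hvlt, hve⟩ := getElem?_some' hv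
    have hcoll_up : G.ColliderAt p i' → H2.ColliderAt p i' := by
      rintro ⟨a, v', cc, ha, hv', hc, hh1, hh2⟩
      obtain ⟨hlt1, he1⟩ := getElem?_some' ha
      obtain ⟨hlt2, he2⟩ := getElem?_some' hv'
      obtain ⟨hlt3, he3⟩ := getElem?_some' hc
      have ma := hvert _ hlt1
      have mv := hvert _ hlt2
      have mc := hvert _ hlt3
      rw [he1] at ma
      rw [he2] at mv
      rw [he3] at mc
      refine ⟨a, v', cc, ha, hv', hc, ?_, ?_⟩
      · rcases hh1 with hd | hb
        · exact Or.inl ⟨⟨hd, ma.1, mv.1⟩, ma.2, mv.2⟩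
        · exact Or.inr ⟨⟨hb, ma.1, mv.1⟩, ma.2, mv.2⟩
      · rcases hh2 with hd | hb
        · exact Or.inl ⟨⟨hd, mc.1, mv.1⟩, mc.2, mv.2⟩
        · exact Or.inr ⟨⟨hb, mc.1, mv.1⟩, mc.2, mv.2⟩
    have hcoll_down : H2.ColliderAt p i' → G.ColliderAt p i' := by
      rintro ⟨a, v', cc, ha, hv', hc, hh1, hh2⟩
      refine ⟨a, v', cc, ha, hv', hc, ?_, ?_⟩
      · rcases hh1 with hd | hb
        · exact Or.inl hd.1.1
        · exact Or.inr hb.1.1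
      · rcases hh2 with hd | hb
        · exact Or.inl hd.1.1
        · exact Or.inr hb.1.1
    have hmain := hint i' v h1 h2 hv
    constructor
    · intro hcolG
      obtain ⟨y, hy, hanc⟩ := hmain.1 (hcoll_up hcolG)
      refine ⟨y, ?_, hancmono _ _ hanc⟩
      rcases hy with hy | hy
      · exact Or.inl hy
      · exact Or.inr hy.1
    · intro hncolG
      have hnot := hmain.2 (fun hcol => hncolG (hcoll_down hcol))
      intro hvZ
      apply hnot
      refine ⟨hvZ, ?_⟩
      have := (hvert i' hvlt).2
      rw [hve] at this
      simp [this]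
  exact hnotleft (hiff.mpr hright)
end

section
/- Let M be a MAG whose edge-induced subgraph over the undirected edges is chordal. Then every induced subgraph of M (on any nonempty vertex subset) contains at least one removable vertex. -/
namespace MixedGraph

/-- The edge-induced subgraph over the undirected edges is chordal: every
cycle of length ≥ 4 made of undirected edges has a chord (an undirected edge
between two non-consecutive vertices of the cycle). -/
def UndChordal {V : Type*} (G : MixedGraph V) : Prop :=
  ∀ p : List V, 4 ≤ p.length → p.Chain' G.und → p.Nodup →
    (∀ a b, p.head? = some a → p.getLast? = some b → G.und b a) →
    ∃ i j a b, i + 2 ≤ j ∧ j < p.length ∧ ¬ (i = 0 ∧ j + 1 = p.length) ∧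
      p[i]? = some a ∧ p[j]? = some b ∧ G.und a b

end MixedGraph
namespace Stmt16

open List

variable {V : Type*}

/-! ### list utilities -/

lemma chain'_rel {R : V → V → Prop} {l : List V} (h : l.Chain' R) {i : ℕ} {a b : V}
    (ha : l[i]? = some a) (hb : l[i+1]? = some b) : R a b := by
  rw [List.getElem?_eq_some_iff] at ha hb
  obtain ⟨hi, rfl⟩ := ha
  obtain ⟨hj, rfl⟩ := hb
  have := List.isChain_iff_getElem.1 h i (by omega)
  simpa using this

lemma chain'_of_rel {R : V → V → Prop} {l : List V}
    (h : ∀ (i : ℕ) a b, l[i]? = some a → l[i+1]? = some b → R a b) : l.Chain' R := by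
  unfold List.Chain'; rw [List.isChain_iff_getElem]
  intro i hi
  exact h i _ _ (by rw [List.getElem?_eq_some_iff]; exact ⟨by omega, by simp⟩)
    (by rw [List.getElem?_eq_some_iff]; exact ⟨by omega, by simp⟩)

lemma mem_of_get? {l : List V} {i : ℕ} {a : V} (h : l[i]? = some a) : a ∈ l := by
  rw [List.getElem?_eq_some_iff] at h
  obtain ⟨hi, rfl⟩ := h
  exact List.getElem_mem hi

lemma internal_ne {l : List V} (hn : l.Nodup) {i : ℕ} {v Y W : V}
    (hv : l[i]? = some v) (h1 : 1 ≤ i) (h2 : i + 1 < l.length)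
    (hY : l.head? = some Y) (hW : l.getLast? = some W) : v ≠ Y ∧ v ≠ W := by
  rw [List.head?_eq_getElem?] at hY
  rw [List.getLast?_eq_getElem?] at hW
  rw [List.getElem?_eq_some_iff] at hv hY hW
  obtain ⟨hi, rfl⟩ := hv
  obtain ⟨h0, rfl⟩ := hY
  obtain ⟨hl, rfl⟩ := hW
  constructor
  · intro h
    have := (hn.getElem_inj_iff).1 h
    omega
  · intro h
    have := (hn.getElem_inj_iff).1 h
    omega

lemma mem_internal {l : List V} {v Y W : V} (hv : v ∈ l)
    (hY : l.head? = some Y) (hW : l.getLast? = some W) (hvY : v ≠ Y) (hvW : v ≠ W) :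
    ∃ i, 1 ≤ i ∧ i + 1 < l.length ∧ l[i]? = some v := by
  rw [List.head?_eq_getElem?] at hY
  rw [List.getLast?_eq_getElem?] at hW
  rw [List.getElem?_eq_some_iff] at hY hW
  obtain ⟨h0, hY⟩ := hY
  obtain ⟨hl, hW⟩ := hW
  obtain ⟨i, hi, rfl⟩ := List.mem_iff_getElem.1 hv
  have hi0 : i ≠ 0 := by rintro rfl; exact hvY hY
  have hil : i ≠ l.length - 1 := by rintro rfl; exact hvW hW
  exact ⟨i, by omega, by omega, by rw [List.getElem?_eq_some_iff]; exact ⟨hi, rfl⟩⟩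

lemma head?_mem {l : List V} {a : V} (h : l.head? = some a) : a ∈ l :=
  List.mem_of_mem_head? (by rw [h]; rfl)

lemma getLast?_mem {l : List V} {a : V} (h : l.getLast? = some a) : a ∈ l := by
  rw [List.getLast?_eq_getElem?] at h
  exact mem_of_get? h

end Stmt16
set_option linter.dupNamespace false
namespace Stmt16
open List MixedGraph

variable {V : Type*}

@[simp] lemma induce_dir (G : MixedGraph V) (S : Set V) (x y : V) :
    (G.induce S).dir x y ↔ G.dir x y ∧ x ∈ S ∧ y ∈ S := Iff.rfl
@[simp] lemma induce_bi (G : MixedGraph V) (S : Set V) (x y : V) :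
    (G.induce S).bi x y ↔ G.bi x y ∧ x ∈ S ∧ y ∈ S := Iff.rfl
@[simp] lemma induce_und (G : MixedGraph V) (S : Set V) (x y : V) :
    (G.induce S).und x y ↔ G.und x y ∧ x ∈ S ∧ y ∈ S := Iff.rfl

lemma adj_symm (G : MixedGraph V) {a b : V} (h : G.adj a b) : G.adj b a := by
  rcases h with h | h | h | h
  · exact Or.inr (Or.inl h)
  · exact Or.inl h
  · exact Or.inr (Or.inr (Or.inl (G.bi_symm _ _ h)))
  · exact Or.inr (Or.inr (Or.inr (G.und_symm _ _ h)))

lemma adj_induce {G : MixedGraph V} {S : Set V} {a b : V} :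
    (G.induce S).adj a b ↔ G.adj a b ∧ a ∈ S ∧ b ∈ S := by
  unfold MixedGraph.adj
  simp only [induce_dir, induce_bi, induce_und]
  tauto

lemma head_induce {G : MixedGraph V} {S : Set V} {a b : V} :
    (G.induce S).head a b ↔ G.head a b ∧ a ∈ S ∧ b ∈ S := by
  unfold MixedGraph.head
  simp only [induce_dir, induce_bi]
  tauto

lemma anc_induce_mono {G : MixedGraph V} {S : Set V} {a b : V}
    (h : (G.induce S).anc a b) : G.anc a b :=
  (Relation.ReflTransGen.mono (r := (G.induce S).dir) (p := G.dir) (fun _ _ hh => hh.1)) a b h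

lemma colliderAt_induce {G : MixedGraph V} {S : Set V} {p : List V} {i : ℕ}
    (hc : p.Chain' (G.induce S).adj) (h1 : 1 ≤ i) (h2 : i + 1 < p.length) :
    (G.induce S).ColliderAt p i ↔ G.ColliderAt p i := by
  constructor
  · rintro ⟨a, v, c, ha, hv, hcc, h1', h2'⟩
    exact ⟨a, v, c, ha, hv, hcc, (head_induce.1 h1').1, (head_induce.1 h2').1⟩
  · rintro ⟨a, v, c, ha, hv, hcc, hav, hcv⟩
    have e : i - 1 + 1 = i := by omega
    have hadj1 : (G.induce S).adj a v := chain'_rel hc ha (by rw [e]; exact hv)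
    have hadj2 : (G.induce S).adj v c := chain'_rel hc hv hcc
    have h1S := adj_induce.1 hadj1
    have h2S := adj_induce.1 hadj2
    exact ⟨a, v, c, ha, hv, hcc, head_induce.2 ⟨hav, h1S.2.1, h1S.2.2⟩,
      head_induce.2 ⟨hcv, h2S.2.2, h1S.2.2⟩⟩

lemma mconn_of_induce {G : MixedGraph V} {S : Set V} {p : List V} {x y : V} {Z : Set V}
    (h : (G.induce S).MConn p x y Z) : G.MConn p x y Z := by
  obtain ⟨⟨⟨hch, hnd, hlen⟩, hh, hl⟩, hint⟩ := h
  refine ⟨⟨⟨hch.imp (fun a b hh => (adj_induce.1 hh).1), hnd, hlen⟩, hh, hl⟩, ?_⟩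
  intro i v h1 h2 hv
  obtain ⟨hcol, hncol⟩ := hint i v h1 h2 hv
  have hiff := colliderAt_induce hch h1 h2
  constructor
  · intro hC
    obtain ⟨t, ht, hanc⟩ := hcol (hiff.2 hC)
    exact ⟨t, ht, anc_induce_mono hanc⟩
  · intro hC
    exact hncol (fun hg => hC (hiff.1 hg))

lemma anc_eq_self_of_childless {G : MixedGraph V} {x t : V}
    (hx : ∀ z, ¬ G.dir x z) (h : G.anc x t) : t = x := by
  rcases Relation.ReflTransGen.cases_head h with h | ⟨c, hc, _⟩
  · exact h.symm
  · exact absurd hc (hx c)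

lemma anc_restrict {G : MixedGraph V} {x v t : V}
    (hx : ∀ z, ¬ G.dir x z) (hv : v ≠ x) (h : G.anc v t) (ht : t ≠ x) :
    (G.induce {w | w ≠ x}).anc v t := by
  induction h with
  | refl => exact .refl
  | @tail c d hvc hcd ih =>
    have hcx : c ≠ x := fun e => hx d (e ▸ hcd)
    exact (ih hcx).tail ⟨hcd, hcx, ht⟩

lemma mconn_to_induce {G : MixedGraph V} {x : V} {p : List V} {Y W : V} {Z : Set V}
    (hx : ∀ z, ¬ G.dir x z) (hxp : x ∉ p) (hZ : x ∉ Z)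
    (h : G.MConn p Y W Z) : (G.induce {v | v ≠ x}).MConn p Y W Z := by
  obtain ⟨⟨⟨hch, hnd, hlen⟩, hh, hl⟩, hint⟩ := h
  have hchS : p.Chain' (G.induce {v | v ≠ x}).adj := by
    apply chain'_of_rel
    intro i a b ha hb
    have hadj := chain'_rel hch ha hb
    have haS : a ≠ x := fun e => hxp (e ▸ mem_of_get? ha)
    have hbS : b ≠ x := fun e => hxp (e ▸ mem_of_get? hb)
    exact adj_induce.2 ⟨hadj, haS, hbS⟩
  refine ⟨⟨⟨hchS, hnd, hlen⟩, hh, hl⟩, ?_⟩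
  intro i v h1 h2 hv
  obtain ⟨hcol, hncol⟩ := hint i v h1 h2 hv
  have hiff := colliderAt_induce hchS h1 h2
  constructor
  · intro hC
    obtain ⟨t, ht, hanc⟩ := hcol (hiff.1 hC)
    have hvx : v ≠ x := fun e => hxp (e ▸ mem_of_get? hv)
    have htx : t ≠ x := by
      simp only [Set.mem_union, Set.mem_insert_iff, Set.mem_singleton_iff] at ht
      rcases ht with (rfl | rfl) | htZ
      · exact fun e => hxp (e ▸ head?_mem hh)
      · exact fun e => hxp (e ▸ getLast?_mem hl)
      · exact fun e => hZ (e ▸ htZ)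
    exact ⟨t, ht, anc_restrict hx hvx hanc htx⟩
  · intro hC
    exact hncol (fun hg => hC (hiff.2 hg))

lemma exists_sink [Fintype V] (G : MixedGraph V)
    (acy : ∀ a b, G.dir a b → ¬ G.anc b a) (y : V) :
    ∃ x, G.anc y x ∧ ∀ z, ¬ G.dir x z := by
  obtain ⟨x, hx, hmin⟩ := Set.exists_min_image {v | G.anc y v} (fun v => (G.desc v).ncard)
    (Set.toFinite _) ⟨y, Relation.ReflTransGen.refl⟩
  refine ⟨x, hx, fun z hz => ?_⟩
  have hsub : G.desc z ⊆ G.desc x := fun w hw => (Relation.ReflTransGen.single hz).trans hw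
  have hxz : x ∉ G.desc z := fun hw => acy _ _ hz hw
  have hlt : (G.desc z).ncard < (G.desc x).ncard := by
    refine Set.ncard_lt_ncard ?_ (Set.toFinite _)
    exact (Set.ssubset_iff_of_subset hsub).2 ⟨x, Relation.ReflTransGen.refl, hxz⟩
  have := hmin z (hx.tail hz)
  omega

end Stmt16
set_option linter.dupNamespace false
namespace Stmt16
open List MixedGraph

variable {V : Type*}

lemma removable_of_childless_allhead (G : MixedGraph V) (x : V)
    (hsink : ∀ z, ¬ G.dir x z)
    (hhead : ∀ a, G.adj a x → G.head a x) : G.Removable x := by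
  intro Y W hY hW hYW Z hZ
  have hZx : x ∉ Z := fun h => (hZ h).1 rfl
  constructor
  · intro hsep p hp
    exact hsep p (mconn_of_induce hp)
  · intro hsep p hp
    have hxp : x ∉ p := by
      intro hmem
      obtain ⟨⟨⟨hch, hnd, hlen⟩, hh, hl⟩, hint⟩ := hp
      obtain ⟨i, h1, h2, hi⟩ := mem_internal hmem hh hl (Ne.symm hY) (Ne.symm hW)
      have hlen1 : i - 1 < p.length := by omega
      have hlen2 : i + 1 < p.length := h2
      obtain ⟨a, ha⟩ : ∃ a, p[i-1]? = some a := ⟨p[i-1], List.getElem?_eq_getElem hlen1⟩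
      obtain ⟨c, hc⟩ : ∃ c, p[i+1]? = some c := ⟨p[i+1], List.getElem?_eq_getElem hlen2⟩
      have e : i - 1 + 1 = i := by omega
      have hav : G.adj a x := chain'_rel hch ha (by rw [e]; exact hi)
      have hxc : G.adj x c := chain'_rel hch hi hc
      have hC : G.ColliderAt p i :=
        ⟨a, x, c, ha, hi, hc, hhead a hav, hhead c (adj_symm G hxc)⟩
      obtain ⟨t, ht, hanc⟩ := (hint i x h1 h2 hi).1 hC
      have htx : t = x := anc_eq_self_of_childless hsink hanc
      subst htx
      simp only [Set.mem_union, Set.mem_insert_iff, Set.mem_singleton_iff] at ht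
      rcases ht with (rfl | rfl) | htZ
      · exact hY rfl
      · exact hW rfl
      · exact hZx htZ
    exact hsep p (mconn_to_induce hsink hxp hZx hp)

lemma removable_of_simplicial (G : MixedGraph V) (x : V)
    (hndir : ∀ a b, ¬ G.dir a b) (hnbi : ∀ a b, ¬ G.bi a b)
    (hsimp : ∀ a c, a ≠ x → c ≠ x → a ≠ c → G.und x a → G.und x c → G.und a c) :
    G.Removable x := by
  have hnohead : ∀ a b, ¬ G.head a b := fun a b h => h.elim (hndir a b) (hnbi a b)
  have hnocol : ∀ (q : List V) i, ¬ G.ColliderAt q i := by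
    rintro q i ⟨a, v, c, _, _, _, h, _⟩
    exact hnohead a v h
  have hadj_und : ∀ a b, G.adj a b → G.und a b := by
    intro a b h
    rcases h with h | h | h | h
    exacts [absurd h (hndir a b), absurd h (hndir b a), absurd h (hnbi a b), h]
  intro Y W hY hW hYW Z hZ
  have hZx : x ∉ Z := fun h => (hZ h).1 rfl
  constructor
  · intro hsep p hp
    exact hsep p (mconn_of_induce hp)
  · intro hsep p hp
    have hsink : ∀ z, ¬ G.dir x z := fun z => hndir x z
    by_cases hxp : x ∈ p
    · -- splice out x
      obtain ⟨⟨⟨hch, hnd, hlen⟩, hh, hl⟩, hint⟩ := hp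
      obtain ⟨l1, l2, rfl⟩ := List.append_of_mem hxp
      have hxY : x ≠ Y := Ne.symm hY
      have hxW : x ≠ W := Ne.symm hW
      have hl1 : l1 ≠ [] := by
        rintro rfl
        simp only [List.nil_append, List.head?_cons, Option.some.injEq] at hh
        exact hxY hh
      have hl2 : l2 ≠ [] := by
        rintro rfl
        rw [show l1 ++ x :: [] = l1 ++ [x] from rfl, List.getLast?_concat] at hl
        exact hxW (by injection hl)
      obtain ⟨s, a, rfl⟩ := (l1.eq_nil_or_concat).resolve_left hl1
      obtain ⟨c, t, rfl⟩ := List.exists_cons_of_ne_nil hl2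
      simp only [List.concat_eq_append] at hxp hint hch hnd hlen hh hl
      rw [List.nodup_append] at hnd
      obtain ⟨hnd1, hnd2, hdisj⟩ := hnd
      have haxct : a ∉ x :: c :: t := fun hm => hdisj a (by simp) a hm rfl
      have hax : a ≠ x := fun e => haxct (by simp [e])
      have hac : a ≠ c := fun e => haxct (by simp [e])
      have hxsa : x ∉ s ++ [a] := fun hm => hdisj x hm x (by simp) rfl
      have hxct : x ∉ c :: t := (List.nodup_cons.1 hnd2).1
      have hcx : c ≠ x := fun e => hxct (by simp [e])
      have hndp' : ((s ++ [a]) ++ c :: t).Nodup := by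
        rw [List.nodup_append]
        exact ⟨hnd1, (List.nodup_cons.1 hnd2).2,
          fun z hz1 z' hz2 => hdisj z hz1 z' (List.mem_cons_of_mem _ hz2)⟩
      unfold List.Chain' at hch; rw [List.isChain_append] at hch
      obtain ⟨hch1, hch2, hlink⟩ := hch
      have hax_adj : G.adj a x := by
        apply hlink a _ x rfl
        rw [List.getLast?_concat]; rfl
      have hxc_adj : G.adj x c := (List.isChain_cons_cons.1 hch2).1
      have hchct : (c :: t).Chain' G.adj := (List.isChain_cons_cons.1 hch2).2
      have hxa : G.und x a := G.und_symm _ _ (hadj_und _ _ hax_adj)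
      have hxc2 : G.und x c := hadj_und _ _ hxc_adj
      have huac : G.und a c := hsimp a c hax hcx hac hxa hxc2
      have hchp' : ((s ++ [a]) ++ c :: t).Chain' G.adj := by
        unfold List.Chain'; rw [List.isChain_append]
        refine ⟨hch1, hchct, ?_⟩
        intro u hu v hv
        rw [List.getLast?_concat] at hu
        simp only [Option.mem_def, Option.some.injEq] at hu
        simp only [List.head?_cons, Option.mem_def, Option.some.injEq] at hv
        subst hu; subst hv
        exact Or.inr (Or.inr (Or.inr huac))
      have hhp' : ((s ++ [a]) ++ c :: t).head? = some Y := by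
        rw [List.head?_append] at hh ⊢
        rcases hsa : (s ++ [a]).head? with _ | d
        · rw [List.head?_eq_none_iff] at hsa
          simp at hsa
        · rw [hsa] at hh
          exact hh
      have hlp' : ((s ++ [a]) ++ c :: t).getLast? = some W := by
        rw [List.getLast?_append] at hl ⊢
        rw [List.getLast?_cons_cons] at hl
        exact hl
      have hlenp' : 2 ≤ ((s ++ [a]) ++ c :: t).length := by
        simp only [List.length_append, List.length_cons, List.length_singleton]
        omega
      have hsub : ((s ++ [a]) ++ c :: t) <+ ((s ++ [a]) ++ x :: c :: t) :=
        (List.sublist_cons_self x (c :: t)).append_left (s ++ [a])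
      have hxp' : x ∉ (s ++ [a]) ++ c :: t := by
        intro hm
        rcases List.mem_append.1 hm with hm | hm
        · exact hxsa hm
        · exact hxct hm
      have hintp' : ∀ i v, 1 ≤ i → i + 1 < ((s ++ [a]) ++ c :: t).length →
          ((s ++ [a]) ++ c :: t)[i]? = some v →
          (G.ColliderAt ((s ++ [a]) ++ c :: t) i → v ∈ G.ancSet ({Y, W} ∪ Z)) ∧
          (¬ G.ColliderAt ((s ++ [a]) ++ c :: t) i → v ∉ Z) := by
        intro i v h1 h2 hv
        refine ⟨fun hC => absurd hC (hnocol _ _), fun _ => ?_⟩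
        have hne := internal_ne hndp' hv h1 h2 hhp' hlp'
        have hvp : v ∈ (s ++ [a]) ++ x :: c :: t := hsub.subset (mem_of_get? hv)
        obtain ⟨j, j1, j2, hj⟩ := mem_internal hvp hh hl hne.1 hne.2
        exact (hint j v j1 j2 hj).2 (hnocol _ _)
      have hp' : G.MConn ((s ++ [a]) ++ c :: t) Y W Z :=
        ⟨⟨⟨hchp', hndp', hlenp'⟩, hhp', hlp'⟩, hintp'⟩
      exact hsep _ (mconn_to_induce hsink hxp' hZx hp')
    · exact hsep p (mconn_to_induce hsink hxp hZx hp)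

end Stmt16
set_option linter.dupNamespace false
namespace Stmt16
open List MixedGraph

variable {V : Type*}

lemma getLast?_append_cons (l : List V) (x : V) (r : List V) :
    (l ++ x :: r).getLast? = (x :: r).getLast? := by
  rw [List.getLast?_append, Option.or_of_isSome (List.getLast?_isSome.2 (by simp))]

lemma chain'_splice {R : V → V → Prop} {l1 l2 l3 : List V} {v : V}
    (h : List.Chain' R (l1 ++ v :: (l2 ++ v :: l3))) : List.Chain' R (l1 ++ v :: l3) := by
  unfold List.Chain' at h ⊢; rw [List.isChain_append] at h ⊢
  obtain ⟨h1, h2, h12⟩ := h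
  have h2' : List.Chain' R ((v :: l2) ++ v :: l3) := by simpa [List.Chain'] using h2
  refine ⟨h1, (List.isChain_append.1 h2').2.1, ?_⟩
  intro a ha b hb
  exact h12 a ha b (by simpa using hb)

lemma head?_splice (l1 l2 l3 : List V) (v : V) :
    (l1 ++ v :: l3).head? = (l1 ++ v :: (l2 ++ v :: l3)).head? := by
  cases l1 <;> simp

lemma getLast?_splice (l1 l2 l3 : List V) (v : V) :
    (l1 ++ v :: l3).getLast? = (l1 ++ v :: (l2 ++ v :: l3)).getLast? := by
  rw [getLast?_append_cons]
  rw [show l1 ++ v :: (l2 ++ v :: l3) = (l1 ++ v :: l2) ++ v :: l3 by simp]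
  rw [getLast?_append_cons]

lemma not_nodup_decomp {l : List V} (h : ¬ l.Nodup) :
    ∃ (l1 : List V) (v : V) (l2 l3 : List V), l = l1 ++ v :: (l2 ++ v :: l3) := by
  induction l with
  | nil => simp at h
  | cons a l ih =>
    by_cases ha : a ∈ l
    · obtain ⟨s, t, rfl⟩ := List.append_of_mem ha
      exact ⟨[], a, s, t, by simp⟩
    · have hnl : ¬ l.Nodup := fun hn => h (List.nodup_cons.2 ⟨ha, hn⟩)
      obtain ⟨l1, v, l2, l3, rfl⟩ := ih hnl
      exact ⟨a :: l1, v, l2, l3, rfl⟩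

lemma rtg_chain' {r : V → V → Prop} {p q : V} (h : Relation.ReflTransGen r p q) :
    ∃ l : List V, l.Chain' r ∧ l.head? = some p ∧ l.getLast? = some q := by
  induction h with
  | refl => exact ⟨[p], List.isChain_singleton _, rfl, by simp⟩
  | @tail c d hpc hcd ih =>
    obtain ⟨l, hc, hh, hl⟩ := ih
    refine ⟨l ++ [d], ?_, ?_, List.getLast?_concat⟩
    · unfold List.Chain'; rw [List.isChain_append]
      refine ⟨hc, List.isChain_singleton _, ?_⟩
      intro a ha b hb
      rw [Option.mem_def] at ha hb
      rw [ha] at hl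
      simp only [List.head?_cons, Option.some.injEq] at hb hl
      subst hb; subst hl
      exact hcd
    · rw [List.head?_append, hh]; rfl

lemma rtg_nodup_chain {r : V → V → Prop} {p q : V} (h : Relation.ReflTransGen r p q) :
    ∃ l : List V, l.Chain' r ∧ l.Nodup ∧ l.head? = some p ∧ l.getLast? = some q := by
  obtain ⟨l, hc, hh, hl⟩ := rtg_chain' h
  clear h
  have H : ∀ n (l : List V), l.length ≤ n → l.Chain' r → l.head? = some p →
      l.getLast? = some q →
      ∃ m : List V, m.Chain' r ∧ m.Nodup ∧ m.head? = some p ∧ m.getLast? = some q := by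
    intro n
    induction n with
    | zero =>
      intro l h0 _ hh _
      cases l with
      | nil => simp at hh
      | cons a t => simp at h0
    | succ n ih =>
      intro l hln hc hh hl
      by_cases hnd : l.Nodup
      · exact ⟨l, hc, hnd, hh, hl⟩
      · obtain ⟨l1, v, l2, l3, rfl⟩ := not_nodup_decomp hnd
        refine ih (l1 ++ v :: l3) ?_ (chain'_splice hc) ?_ ?_
        · simp only [List.length_append, List.length_cons] at hln ⊢
          omega
        · rw [head?_splice l1 l2 l3 v]; exact hh
        · rw [getLast?_splice l1 l2 l3 v]; exact hl
  exact H l.length l le_rfl hc hh hl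

lemma chain'_head_rtg {r : V → V → Prop} {l : List V} {h0 w : V}
    (hc : l.Chain' r) (hh : l.head? = some h0) (hw : w ∈ l) :
    Relation.ReflTransGen r h0 w := by
  induction l generalizing h0 with
  | nil => simp at hw
  | cons a t ih =>
    simp only [List.head?_cons, Option.some.injEq] at hh
    subst hh
    rcases List.mem_cons.1 hw with rfl | hw'
    · exact .refl
    · cases t with
      | nil => simp at hw'
      | cons b t2 =>
        have hr : r a b := (List.isChain_cons_cons.1 hc).1
        exact (Relation.ReflTransGen.single hr).trans
          (ih (List.isChain_cons_cons.1 hc).2 rfl hw')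

lemma chain'_crossing {r : V → V → Prop} {P : Set V} :
    ∀ {l : List V} {p q : V}, l.Chain' r → l.head? = some p → l.getLast? = some q →
      p ∈ P → q ∉ P → ∃ s t, r s t ∧ s ∈ P ∧ t ∉ P := by
  intro l
  induction l with
  | nil => intro p q _ hh _ _ _; simp at hh
  | cons a t ih =>
    intro p q hc hh hl hp hq
    simp only [List.head?_cons, Option.some.injEq] at hh
    subst hh
    cases t with
    | nil =>
      rw [List.getLast?_singleton] at hl
      injection hl with hl
      subst hl
      exact absurd hp hq
    | cons b t2 =>
      by_cases hb : b ∈ P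
      · exact ih (List.isChain_cons_cons.1 hc).2 rfl (by rwa [List.getLast?_cons_cons] at hl) hb hq
      · exact ⟨a, b, (List.isChain_cons_cons.1 hc).1, hp, hb⟩

lemma head?_take {l : List V} {n : ℕ} (hn : 1 ≤ n) : (l.take n).head? = l.head? := by
  cases l with
  | nil => simp
  | cons a t =>
    cases n with
    | zero => omega
    | succ m => simp

lemma getLast?_take {l : List V} {i : ℕ} {a : V} (h : l[i]? = some a) :
    (l.take (i+1)).getLast? = some a := by
  rw [List.take_succ, h]
  simp

lemma getLast?_drop {l : List V} {j : ℕ} (h : j < l.length) :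
    (l.drop j).getLast? = l.getLast? := by
  conv_rhs => rw [← List.take_append_drop j l]
  rw [List.getLast?_append, Option.or_of_isSome]
  rw [List.getLast?_isSome]
  intro he
  rw [List.drop_eq_nil_iff] at he
  omega

def PathSet (u : V → V → Prop) (X : Set V) (v w : V) : Set (List V) :=
  {l | l.Chain' u ∧ l.Nodup ∧ l.head? = some v ∧ l.getLast? = some w ∧ 3 ≤ l.length ∧
       ∀ z ∈ l, z = v ∨ z = w ∨ z ∈ X}

lemma min_no_chord {u : V → V → Prop} {X : Set V} {v w : V} (hvw : ¬ u v w)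
    {l : List V} (hl : l ∈ PathSet u X v w)
    (hmin : ∀ l' ∈ PathSet u X v w, l.length ≤ l'.length)
    {i j : ℕ} {a b : V} (hij : i + 2 ≤ j) (hjl : j < l.length)
    (ha : l[i]? = some a) (hb : l[j]? = some b) : ¬ u a b := by
  intro hab
  obtain ⟨hc, hnd, hh, hlast, hlen, hmem⟩ := hl
  by_cases hcase : i = 0 ∧ j = l.length - 1
  · obtain ⟨rfl, hj'⟩ := hcase
    rw [List.head?_eq_getElem?, ha] at hh
    injection hh with hh
    subst hh
    rw [List.getLast?_eq_getElem?, ← hj', hb] at hlast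
    injection hlast with hlast
    subst hlast
    exact hvw hab
  · have hc' : (l.take (i+1) ++ l.drop j).Chain' u := by
      unfold List.Chain'; rw [List.isChain_append]
      refine ⟨hc.take _, hc.drop _, ?_⟩
      intro x hx y hy
      rw [Option.mem_def, getLast?_take ha] at hx
      rw [Option.mem_def, List.head?_drop, hb] at hy
      injection hx with hx
      injection hy with hy
      subst hx; subst hy
      exact hab
    have hdj : l.drop j <+ l.drop (i+1) := by
      rw [show j = (i+1) + (j - (i+1)) by omega, ← List.drop_drop]
      exact List.drop_sublist _ _
    have hsub : (l.take (i+1) ++ l.drop j) <+ l := by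
      conv_rhs => rw [← List.take_append_drop (i+1) l]
      exact hdj.append_left _
    have hnd' : (l.take (i+1) ++ l.drop j).Nodup := hnd.sublist hsub
    have hh' : (l.take (i+1) ++ l.drop j).head? = some v := by
      rw [List.head?_append, head?_take (by omega), hh]; rfl
    have hlast' : (l.take (i+1) ++ l.drop j).getLast? = some w := by
      rw [List.getLast?_append, getLast?_drop (by omega), hlast]; rfl
    have hlen' : 3 ≤ (l.take (i+1) ++ l.drop j).length := by
      rw [not_and_or] at hcase
      rw [List.length_append, List.length_take, List.length_drop,
        min_eq_left (show i + 1 ≤ l.length by omega)]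
      rcases hcase with h0 | h1 <;> omega
    have hmem' : ∀ z ∈ (l.take (i+1) ++ l.drop j), z = v ∨ z = w ∨ z ∈ X :=
      fun z hz => hmem z (hsub.subset hz)
    have := hmin _ ⟨hc', hnd', hh', hlast', hlen', hmem'⟩
    rw [List.length_append, List.length_take, List.length_drop,
      min_eq_left (show i + 1 ≤ l.length by omega)] at this
    omega

end Stmt16
set_option linter.dupNamespace false
namespace Stmt16
open List MixedGraph

variable {V : Type*}

def SimpIn (u : V → V → Prop) (S : Set V) (x : V) : Prop :=
  ∀ a c, a ∈ S → c ∈ S → a ≠ x → c ≠ x → a ≠ c → u x a → u x c → u a c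

end Stmt16
set_option linter.dupNamespace false
namespace Stmt16
open List MixedGraph

variable {V : Type*}

lemma getElem?_inj_nodup {l : List V} (h : l.Nodup) {i j : ℕ} {z : V}
    (hi : l[i]? = some z) (hj : l[j]? = some z) : i = j := by
  rw [List.getElem?_eq_some_iff] at hi hj
  obtain ⟨hi1, hi2⟩ := hi
  obtain ⟨hj1, hj2⟩ := hj
  exact (h.getElem_inj_iff).1 (hi2.trans hj2.symm)

def relIn (u : V → V → Prop) (S C : Set V) (p q : V) : Prop :=
  u p q ∧ p ∈ S ∧ q ∈ S ∧ p ∉ C ∧ q ∉ C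

lemma relIn_symm {u : V → V → Prop} (hsym : ∀ a b, u a b → u b a) {S C : Set V}
    {p q : V} (h : relIn u S C p q) : relIn u S C q p :=
  ⟨hsym _ _ h.1, h.2.2.1, h.2.1, h.2.2.2.2, h.2.2.2.1⟩

lemma reach_symm {u : V → V → Prop} (hsym : ∀ a b, u a b → u b a) {S C : Set V}
    {p q : V} (h : Relation.ReflTransGen (relIn u S C) p q) :
    Relation.ReflTransGen (relIn u S C) q p :=
  (@Relation.ReflTransGen.stdSymm _ _ ⟨fun _ _ hh => relIn_symm hsym hh⟩).symm _ _ h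

lemma reach_mem {u : V → V → Prop} {S C : Set V} {p q : V}
    (h : Relation.ReflTransGen (relIn u S C) p q) :
    q = p ∨ (q ∈ S ∧ q ∉ C) := by
  rcases Relation.ReflTransGen.cases_tail h with h | ⟨c, _, hc⟩
  · exact Or.inl h
  · exact Or.inr ⟨hc.2.2.1, hc.2.2.2.2⟩

lemma dirac_side [Fintype V] {u : V → V → Prop} (hsym : ∀ a b, u a b → u b a)
    {S C : Set V} {a b : V} (haS : a ∈ S) (hbS : b ∈ S)
    (hCS : C ⊆ S) (haC : a ∉ C) (hbC : b ∉ C)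
    (hnr : ¬ Relation.ReflTransGen (relIn u S C) a b)
    (hclique : ∀ v ∈ C, ∀ w ∈ C, v ≠ w → u v w)
    (ih : ∀ T : Set V, T.ncard < S.ncard → T.Nonempty →
      (∀ x ∈ T, ∀ y ∈ T, x ≠ y → u x y) ∨
      (∃ x ∈ T, ∃ y ∈ T, x ≠ y ∧ ¬ u x y ∧ SimpIn u T x ∧ SimpIn u T y)) :
    ∃ x, Relation.ReflTransGen (relIn u S C) a x ∧ SimpIn u S x := by
  set A : Set V := {v | Relation.ReflTransGen (relIn u S C) a v} with hA
  have hASC : ∀ v ∈ A, v ∈ S ∧ v ∉ C := by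
    intro v hv
    rcases reach_mem hv with rfl | h
    · exact ⟨haS, haC⟩
    · exact h
  have hextend : ∀ v ∈ A, ∀ w, u v w → w ∈ S → w ∉ C → w ∈ A := by
    intro v hv w huvw hwS hwC
    exact hv.tail ⟨huvw, (hASC v hv).1, hwS, (hASC v hv).2, hwC⟩
  have hbA : b ∉ A := fun h => hnr h
  have hTsub : A ∪ C ⊆ S := fun z hz => hz.elim (fun h => (hASC z h).1) (fun h => hCS h)
  have hbT : b ∉ A ∪ C := fun h => h.elim hbA hbC
  have hlt : (A ∪ C).ncard < S.ncard := by
    refine Set.ncard_lt_ncard ?_ (Set.toFinite _)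
    exact (Set.ssubset_iff_of_subset hTsub).2 ⟨b, hbS, hbT⟩
  have haA : a ∈ A := Relation.ReflTransGen.refl
  have hlift : ∀ x, x ∈ A → SimpIn u (A ∪ C) x → SimpIn u S x := by
    intro x hxA hx p q hpS hqS hpx hqx hpq hup huq
    have hp' : p ∈ A ∪ C := by
      by_cases hpC : p ∈ C
      · exact Or.inr hpC
      · exact Or.inl (hextend x hxA p hup hpS hpC)
    have hq' : q ∈ A ∪ C := by
      by_cases hqC : q ∈ C
      · exact Or.inr hqC
      · exact Or.inl (hextend x hxA q huq hqS hqC)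
    exact hx p q hp' hq' hpx hqx hpq hup huq
  rcases ih (A ∪ C) hlt ⟨a, Or.inl haA⟩ with hcomp |
    ⟨x, hxT, y, hyT, hxy, hnuxy, hsx, hsy⟩
  · refine ⟨a, haA, hlift a haA ?_⟩
    intro p q hp hq _ _ hpq _ _
    exact hcomp p hp q hq hpq
  · have hone : x ∈ A ∨ y ∈ A := by
      by_contra hno
      push_neg at hno
      exact hnuxy (hclique x (hxT.resolve_left hno.1) y (hyT.resolve_left hno.2) hxy)
    rcases hone with hxA | hyA
    · exact ⟨x, hxA, hlift x hxA hsx⟩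
    · exact ⟨y, hyA, hlift y hyA hsy⟩

end Stmt16
set_option linter.dupNamespace false
set_option maxHeartbeats 1000000
namespace Stmt16
open List MixedGraph

variable {V : Type*}

lemma dirac_main [Fintype V] {u : V → V → Prop} (hsym : ∀ a b, u a b → u b a)
    (hch : ∀ p : List V, 4 ≤ p.length → p.Chain' u → p.Nodup →
      (∀ a b, p.head? = some a → p.getLast? = some b → u b a) →
      ∃ i j a b, i + 2 ≤ j ∧ j < p.length ∧ ¬(i = 0 ∧ j + 1 = p.length) ∧
        p[i]? = some a ∧ p[j]? = some b ∧ u a b) :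
    ∀ n (S : Set V), S.ncard ≤ n → S.Nonempty →
      (∀ x ∈ S, ∀ y ∈ S, x ≠ y → u x y) ∨
      (∃ x ∈ S, ∃ y ∈ S, x ≠ y ∧ ¬ u x y ∧ SimpIn u S x ∧ SimpIn u S y) := by
  intro n
  induction n with
  | zero =>
    intro S h0 hS
    exfalso
    have := Set.ncard_pos (Set.toFinite S) |>.2 hS
    omega
  | succ n ih =>
    intro S hcard hS
    by_cases hcomp : ∀ x ∈ S, ∀ y ∈ S, x ≠ y → u x y
    · exact Or.inl hcomp
    right
    push_neg at hcomp
    obtain ⟨a, haS, b, hbS, hab, hnadj⟩ := hcomp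
    have ihT : ∀ T : Set V, T.ncard < S.ncard → T.Nonempty →
        (∀ x ∈ T, ∀ y ∈ T, x ≠ y → u x y) ∨
        (∃ x ∈ T, ∃ y ∈ T, x ≠ y ∧ ¬ u x y ∧ SimpIn u T x ∧ SimpIn u T y) :=
      fun T h1 h2 => ih T (by omega) h2
    -- a separator exists
    have hsep0 : (S \ {a, b}) ⊆ S ∧ a ∉ (S \ {a, b}) ∧ b ∉ (S \ {a, b}) ∧
        ¬ Relation.ReflTransGen (relIn u S (S \ {a, b})) a b := by
      refine ⟨Set.diff_subset, by simp, by simp, ?_⟩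
      intro hr
      have key : ∀ v, Relation.ReflTransGen (relIn u S (S \ {a, b})) a v → v = a := by
        intro v hv
        induction hv with
        | refl => rfl
        | @tail c d hac hcd ihv =>
          rw [ihv] at hcd
          have hdS := hcd.2.2.1
          have hdC := hcd.2.2.2.2
          have hd : d = a ∨ d = b := by
            by_contra hd
            push_neg at hd
            exact hdC ⟨hdS, by simp [hd.1, hd.2]⟩
          rcases hd with rfl | rfl
          · rfl
          · exact absurd hcd.1 hnadj
      exact hab (key b hr).symm
    -- minimal separator C
    have hKs : ({k | ∃ C : Set V, (C ⊆ S ∧ a ∉ C ∧ b ∉ C ∧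
        ¬ Relation.ReflTransGen (relIn u S C) a b) ∧ C.ncard = k} : Set ℕ).Nonempty :=
      ⟨_, S \ {a, b}, hsep0, rfl⟩
    obtain ⟨C, hCsep, hCcard⟩ := Nat.sInf_mem hKs
    obtain ⟨hCS, haC, hbC, hnr⟩ := hCsep
    have hminC : ∀ C' : Set V, C' ⊆ S → a ∉ C' → b ∉ C' →
        ¬ Relation.ReflTransGen (relIn u S C') a b → C.ncard ≤ C'.ncard := by
      intro C' h1 h2 h3 h4
      exact hCcard ▸ Nat.sInf_le ⟨C', ⟨h1, h2, h3, h4⟩, rfl⟩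
    -- removing any vertex of C reconnects a and b
    have hCv : ∀ v ∈ C, Relation.ReflTransGen (relIn u S (C \ {v})) a b := by
      intro v hv
      by_contra hnr'
      have hlt : (C \ {v}).ncard < C.ncard := by
        refine Set.ncard_lt_ncard ?_ (Set.toFinite _)
        exact (Set.ssubset_iff_of_subset Set.diff_subset).2 ⟨v, hv, by simp⟩
      have := hminC (C \ {v}) (Set.diff_subset.trans hCS) (fun h => haC h.1)
        (fun h => hbC h.1) hnr'
      omega
    -- every vertex of C has a neighbor in the component of any p
    have hcross : ∀ v ∈ C, ∀ (p q : V),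
        Relation.ReflTransGen (relIn u S (C \ {v})) p q →
        ¬ Relation.ReflTransGen (relIn u S C) p q →
        p ∈ S → p ∉ C →
        ∃ s, Relation.ReflTransGen (relIn u S C) p s ∧ u s v := by
      intro v hvC p q hr hnrq hpS hpC
      obtain ⟨l, hc, hh, hl⟩ := rtg_chain' hr
      obtain ⟨s, t, hst, hsP, htP⟩ := chain'_crossing (P := {z | Relation.ReflTransGen (relIn u S C) p z})
        hc hh hl Relation.ReflTransGen.refl hnrq
      have hsSC : s ∈ S ∧ s ∉ C := by
        rcases reach_mem hsP with rfl | h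
        · exact ⟨hpS, hpC⟩
        · exact h
      have htC : t ∈ C := by
        by_contra htC
        exact htP (hsP.tail ⟨hst.1, hsSC.1, hst.2.2.1, hsSC.2, htC⟩)
      have htv : t = v := by
        by_contra hne
        exact hst.2.2.2.2 ⟨htC, hne⟩
      subst htv
      exact ⟨s, hsP, hst.1⟩
    -- components
    set A : Set V := {v | Relation.ReflTransGen (relIn u S C) a v} with hA
    set B : Set V := {v | Relation.ReflTransGen (relIn u S C) b v} with hB
    have hAm : ∀ z ∈ A, z ∈ S ∧ z ∉ C := by
      intro z hz
      rcases reach_mem hz with rfl | h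
      · exact ⟨haS, haC⟩
      · exact h
    have hBm : ∀ z ∈ B, z ∈ S ∧ z ∉ C := by
      intro z hz
      rcases reach_mem hz with rfl | h
      · exact ⟨hbS, hbC⟩
      · exact h
    have hAB : ∀ z, z ∈ A → z ∈ B → False := by
      intro z hzA hzB
      exact hnr (hzA.trans (reach_symm hsym hzB))
    have hnoe : ∀ z ∈ A, ∀ z' ∈ B, ¬ u z z' := by
      intro z hz z' hz' hu
      exact hAB z' (hz.tail ⟨hu, (hAm z hz).1, (hBm z' hz').1, (hAm z hz).2, (hBm z' hz').2⟩) hz'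
    -- C is a clique
    have hclique : ∀ v ∈ C, ∀ w ∈ C, v ≠ w → u v w := by
      intro v hvC w hwC hvw
      by_contra hnu
      have hnu' : ¬ u w v := fun h => hnu (hsym _ _ h)
      have hvS : v ∈ S := hCS hvC
      have hwS : w ∈ S := hCS hwC
      have hvA : v ∉ A := fun h => (hAm v h).2 hvC
      have hwA : w ∉ A := fun h => (hAm w h).2 hwC
      have hvB : v ∉ B := fun h => (hBm v h).2 hvC
      have hwB : w ∉ B := fun h => (hBm w h).2 hwC
      obtain ⟨sv, hsvA, hsv⟩ := hcross v hvC a b (hCv v hvC) hnr haS haC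
      obtain ⟨sw, hswA, hsw⟩ := hcross w hwC a b (hCv w hwC) hnr haS haC
      obtain ⟨tv, htvB, htv⟩ := hcross v hvC b a (reach_symm hsym (hCv v hvC))
        (fun h => hnr (reach_symm hsym h)) hbS hbC
      obtain ⟨tw, htwB, htw⟩ := hcross w hwC b a (reach_symm hsym (hCv w hwC))
        (fun h => hnr (reach_symm hsym h)) hbS hbC
      -- generic construction of a member of PathSet
      have hmk : ∀ (X : Set V) (v' w' sv' sw' : V), sv' ∈ X → sw' ∈ X →
          Relation.ReflTransGen (relIn u S C) sv' sw' →
          (∀ z, Relation.ReflTransGen (relIn u S C) sv' z → z ∈ X) →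
          u v' sv' → u sw' w' → v' ∉ X → w' ∉ X → v' ≠ w' →
          (PathSet u X v' w').Nonempty := by
        intro X v' w' sv' sw' hsv' hsw' hconn hclosure hu1 hu2 hv'X hw'X hv'w'
        obtain ⟨l0, hc0, hnd0, hh0, hl0⟩ := rtg_nodup_chain hconn
        have hmem0 : ∀ z ∈ l0, z ∈ X := fun z hz =>
          hclosure z (chain'_head_rtg hc0 hh0 hz)
        have hvl0 : v' ∉ l0 := fun h => hv'X (hmem0 v' h)
        have hwl0 : w' ∉ l0 := fun h => hw'X (hmem0 w' h)
        have hl0ne : l0 ≠ [] := by rintro rfl; simp at hh0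
        refine ⟨v' :: (l0 ++ [w']), ?_, ?_, rfl, ?_, ?_, ?_⟩
        · unfold List.Chain'; rw [List.isChain_cons]
          constructor
          · intro y hy
            rw [List.head?_append, hh0] at hy
            have hy' : some sv' = some y := hy
            injection hy' with hy'
            subst hy'
            exact hu1
          · rw [List.isChain_append]
            refine ⟨hc0.imp (fun _ _ h => h.1), List.isChain_singleton _, ?_⟩
            intro x hx y hy
            rw [Option.mem_def, hl0] at hx
            simp only [List.head?_cons, Option.mem_def, Option.some.injEq] at hy
            injection hx with hx
            subst hx; subst hy
            exact hu2
        · rw [List.nodup_cons]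
          constructor
          · intro h
            rcases List.mem_append.1 h with h | h
            · exact hvl0 h
            · simp only [List.mem_singleton] at h
              exact hv'w' h
          · rw [List.nodup_append]
            refine ⟨hnd0, by simp, ?_⟩
            intro z hz1 z' hz2 e
            simp only [List.mem_singleton] at hz2
            subst hz2
            subst e
            exact hwl0 hz1
        · rw [show v' :: (l0 ++ [w']) = (v' :: l0) ++ [w'] by simp, List.getLast?_concat]
        · have : 1 ≤ l0.length := List.length_pos_iff.2 hl0ne
          simp only [List.length_cons, List.length_append, List.length_singleton]
          omega
        · intro z hz
          rcases List.mem_cons.1 hz with rfl | hz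
          · exact Or.inl rfl
          · rcases List.mem_append.1 hz with hz | hz
            · exact Or.inr (Or.inr (hmem0 z hz))
            · simp only [List.mem_singleton] at hz
              exact Or.inr (Or.inl hz)
      have hminsel : ∀ (X : Set V) (v' w' : V), (PathSet u X v' w').Nonempty →
          ∃ l ∈ PathSet u X v' w', ∀ l' ∈ PathSet u X v' w', l.length ≤ l'.length := by
        intro X v' w' hne
        obtain ⟨l0, hl0⟩ := hne
        have hKne : ({k | ∃ l ∈ PathSet u X v' w', l.length = k} : Set ℕ).Nonempty :=
          ⟨l0.length, l0, hl0, rfl⟩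
        obtain ⟨l, hlP, hlk⟩ := Nat.sInf_mem hKne
        exact ⟨l, hlP, fun l' hl' => hlk ▸ Nat.sInf_le ⟨l', hl', rfl⟩⟩
      obtain ⟨lP, hlP, hlPmin⟩ := hminsel A v w
        (hmk A v w sv sw hsvA hswA ((reach_symm hsym hsvA).trans hswA)
          (fun z h => hsvA.trans h) (hsym _ _ hsv) hsw hvA hwA hvw)
      obtain ⟨lQ, hlQ, hlQmin⟩ := hminsel B w v
        (hmk B w v tw tv htwB htvB ((reach_symm hsym htwB).trans htvB)
          (fun z h => htwB.trans h) (hsym _ _ htw) htv hwB hvB hvw.symm)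
      obtain ⟨hcP, hndP, hhP, hlastP, hlenP, hmemP⟩ := hlP
      obtain ⟨hcQ, hndQ, hhQ, hlastQ, hlenQ, hmemQ⟩ := hlQ
      -- decompose lQ = w :: mb ++ [v]
      obtain ⟨mb, hlQeq⟩ : ∃ mb, lQ = w :: (mb ++ [v]) := by
        cases lQ with
        | nil => simp at hhQ
        | cons x t =>
          have hx : x = w := by simpa using hhQ
          rcases t.eq_nil_or_concat with rfl | ⟨mb, v0, h⟩
          · simp at hlenQ
          · have h' : t = mb ++ [v0] := by simpa using h
            rw [h'] at hlastQ
            have hv0 : v0 = v := by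
              have h3 := hlastQ
              rw [show x :: (mb ++ [v0]) = (x :: mb) ++ [v0] by simp,
                List.getLast?_concat] at h3
              exact Option.some.inj h3
            exact ⟨mb, by rw [hx, h', hv0]⟩
      subst hlQeq
      have hmbne : mb ≠ [] := by
        rintro rfl
        simp at hlenQ
      have hn1 : 1 ≤ mb.length := List.length_pos_iff.2 hmbne
      have hndQ' := hndQ
      rw [List.nodup_cons] at hndQ'
      have hwmb : w ∉ mb := fun h => hndQ'.1 (List.mem_append.2 (Or.inl h))
      have hndmbv := hndQ'.2
      rw [List.nodup_append] at hndmbv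
      have hndmb : mb.Nodup := hndmbv.1
      have hvmb : v ∉ mb := fun h => hndmbv.2.2 v h v (by simp) rfl
      have hmbB : ∀ z ∈ mb, z ∈ B := by
        intro z hz
        rcases hmemQ z (by simp [hz]) with rfl | rfl | h
        · exact absurd hz hwmb
        · exact absurd hz hvmb
        · exact h
      have hcQ1 := List.isChain_cons.1 hcQ
      have hcmbv : (mb ++ [v]).Chain' u := hcQ1.2
      have hcmb : mb.Chain' u := (List.isChain_append.1 hcmbv).1
      have hwm0 : ∀ y ∈ mb.head?, u w y := by
        intro y hy
        apply hcQ1.1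
        rw [Option.mem_def] at hy
        rw [Option.mem_def, List.head?_append, hy]
        rfl
      have hlastmb : ∀ y ∈ mb.getLast?, u y v := by
        intro y hy
        rw [Option.mem_def] at hy
        have hh2 := (List.isChain_append.1
          (show ((w :: mb) ++ [v]).Chain' u by simpa using hcQ)).2.2
        apply hh2 y ?_ v rfl
        rw [Option.mem_def, show (w :: mb) = [w] ++ mb from rfl,
          List.getLast?_append, hy]
        rfl
      -- the cycle
      have hcyclen : (lP ++ mb).length = lP.length + mb.length := by simp
      have hdisjPmb : ∀ z ∈ lP, z ∈ mb → False := by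
        intro z hz hzmb
        have hzB := hmbB z hzmb
        rcases hmemP z hz with rfl | rfl | h
        · exact hvB hzB
        · exact hwB hzB
        · exact hAB z h hzB
      have hndcyc : (lP ++ mb).Nodup := by
        rw [List.nodup_append]
        exact ⟨hndP, hndmb, fun z hz z' hz' e => by subst e; exact hdisjPmb z hz hz'⟩
      have hccyc : (lP ++ mb).Chain' u := by
        unfold List.Chain'; rw [List.isChain_append]
        refine ⟨hcP, hcmb, ?_⟩
        intro x hx y hy
        rw [Option.mem_def, hlastP] at hx
        injection hx with hx
        subst hx
        exact hwm0 y hy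
      have hcyc4 : 4 ≤ (lP ++ mb).length := by rw [hcyclen]; omega
      have hwrap : ∀ α β, (lP ++ mb).head? = some α → (lP ++ mb).getLast? = some β →
          u β α := by
        intro α β hα hβ
        rw [List.head?_append, hhP] at hα
        have hα' : some v = some α := hα
        injection hα' with hα'
        subst hα'
        rw [List.getLast?_append,
          Option.or_of_isSome (List.getLast?_isSome.2 hmbne)] at hβ
        exact hlastmb β hβ
      obtain ⟨i, j, α, β, hij, hjlen, hexc, hiα, hjβ, hαβ⟩ :=
        hch (lP ++ mb) hcyc4 hccyc hndcyc hwrap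
      have hQlen : (w :: (mb ++ [v])).length = mb.length + 2 := by simp
      have hQidx : ∀ (k : ℕ) (z : V), mb[k]? = some z →
          (w :: (mb ++ [v]))[k+1]? = some z := by
        intro k z hk
        have hkn : k < mb.length := (List.getElem?_eq_some_iff.1 hk).1
        rw [List.getElem?_cons_succ, List.getElem?_append_left hkn]
        exact hk
      have hQ0 : (w :: (mb ++ [v]))[0]? = some w := by simp
      have hQlastidx : (w :: (mb ++ [v]))[mb.length + 1]? = some v := by
        rw [List.getElem?_cons_succ, List.getElem?_append_right (le_refl mb.length)]
        simp
      rcases Nat.lt_or_ge j lP.length with hjL | hjL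
      · have hiP : lP[i]? = some α := by
          rw [List.getElem?_append_left (by omega : i < lP.length)] at hiα
          exact hiα
        have hjP : lP[j]? = some β := by
          rw [List.getElem?_append_left hjL] at hjβ
          exact hjβ
        exact min_no_chord hnu ⟨hcP, hndP, hhP, hlastP, hlenP, hmemP⟩ hlPmin hij hjL
          hiP hjP hαβ
      · rcases Nat.lt_or_ge i lP.length with hiL | hiL
        · have hiP : lP[i]? = some α := by
            rw [List.getElem?_append_left hiL] at hiα
            exact hiα
          have hjmb : mb[j - lP.length]? = some β := by
            rw [List.getElem?_append_right hjL] at hjβ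
            exact hjβ
          have hβB : β ∈ B := hmbB β (mem_of_get? hjmb)
          have hkn : j - lP.length < mb.length := (List.getElem?_eq_some_iff.1 hjmb).1
          rcases hmemP α (mem_of_get? hiP) with rfl | rfl | hαA
          · -- α = v, so i = 0
            have hi0 : i = 0 := getElem?_inj_nodup hndP hiP
              (by rw [← List.head?_eq_getElem?]; exact hhP)
            have hjne : j + 1 ≠ (lP ++ mb).length := fun h => hexc ⟨hi0, h⟩
            have := min_no_chord hnu' ⟨hcQ, hndQ, hhQ, hlastQ, hlenQ, hmemQ⟩ hlQmin
              (i := j - lP.length + 1) (j := mb.length + 1)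
              (by omega) (by rw [hQlen]; omega)
              (hQidx _ _ hjmb) hQlastidx
            exact this (hsym _ _ hαβ)
          · -- α = w, so i = lP.length - 1
            have hiL1 : i = lP.length - 1 := getElem?_inj_nodup hndP hiP
              (by rw [← List.getLast?_eq_getElem?]; exact hlastP)
            have := min_no_chord hnu' ⟨hcQ, hndQ, hhQ, hlastQ, hlenQ, hmemQ⟩ hlQmin
              (i := 0) (j := j - lP.length + 1)
              (by omega) (by rw [hQlen]; omega)
              hQ0 (hQidx _ _ hjmb)
            exact this hαβ
          · exact hnoe α hαA β hβB hαβ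
        · have himb : mb[i - lP.length]? = some α := by
            rw [List.getElem?_append_right hiL] at hiα
            exact hiα
          have hjmb : mb[j - lP.length]? = some β := by
            rw [List.getElem?_append_right hjL] at hjβ
            exact hjβ
          have hkn : j - lP.length < mb.length := (List.getElem?_eq_some_iff.1 hjmb).1
          have := min_no_chord hnu' ⟨hcQ, hndQ, hhQ, hlastQ, hlenQ, hmemQ⟩ hlQmin
            (i := i - lP.length + 1) (j := j - lP.length + 1)
            (by omega) (by rw [hQlen]; omega)
            (hQidx _ _ himb) (hQidx _ _ hjmb)
          exact this hαβ
    -- apply the side lemma twice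
    obtain ⟨xa, hxaA, hxa⟩ := dirac_side hsym haS hbS hCS haC hbC hnr hclique ihT
    obtain ⟨xb, hxbB, hxb⟩ := dirac_side hsym hbS haS hCS hbC haC
      (fun h => hnr (reach_symm hsym h)) hclique ihT
    have hxaS : xa ∈ S := by
      rcases reach_mem hxaA with rfl | h
      · exact haS
      · exact h.1
    have hxbS : xb ∈ S := by
      rcases reach_mem hxbB with rfl | h
      · exact hbS
      · exact h.1
    have hxab : xa ≠ xb := by
      rintro rfl
      exact hnr (hxaA.trans (reach_symm hsym hxbB))
    have hnuab : ¬ u xa xb := by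
      intro hu
      have h1 : xa ∈ S ∧ xa ∉ C := by
        rcases reach_mem hxaA with rfl | h
        · exact ⟨haS, haC⟩
        · exact h
      have h2 : xb ∈ S ∧ xb ∉ C := by
        rcases reach_mem hxbB with rfl | h
        · exact ⟨hbS, hbC⟩
        · exact h
      exact hnr ((hxaA.tail ⟨hu, h1.1, h2.1, h1.2, h2.2⟩).trans (reach_symm hsym hxbB))
    exact ⟨xa, hxaS, xb, hxbS, hxab, hnuab, hxa, hxb⟩

end Stmt16
set_option linter.dupNamespace false
namespace Stmt16
open List MixedGraph

variable {V : Type*}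

lemma dirac [Fintype V] (u : V → V → Prop) (hsym : ∀ a b, u a b → u b a)
    (hch : ∀ p : List V, 4 ≤ p.length → p.Chain' u → p.Nodup →
      (∀ a b, p.head? = some a → p.getLast? = some b → u b a) →
      ∃ i j a b, i + 2 ≤ j ∧ j < p.length ∧ ¬(i = 0 ∧ j + 1 = p.length) ∧
        p[i]? = some a ∧ p[j]? = some b ∧ u a b)
    (S : Set V) (hS : S.Nonempty) : ∃ x ∈ S, SimpIn u S x := by
  rcases dirac_main hsym hch S.ncard S le_rfl hS with hcomp |
    ⟨x, hxS, y, hyS, hxy, hnuxy, hsx, hsy⟩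
  · obtain ⟨x, hx⟩ := hS
    exact ⟨x, hx, fun p q hpS hqS _ _ hpq _ _ => hcomp p hpS q hqS hpq⟩
  · exact ⟨x, hxS, hsx⟩

end Stmt16


open MixedGraph Stmt16 in
theorem stmt16_aux {V : Type*} [Fintype V] (M : MixedGraph V) (hM : M.IsMAG)
    (hchordal : M.UndChordal) :
    ∀ S : Set V, S.Nonempty → ∃ x ∈ S, (M.induce S).Removable x := by
  intro S hS
  by_cases hcase : ∃ y z, (M.induce S).head z y
  · obtain ⟨y, z, hzy⟩ := hcase
    have acy : ∀ a b, (M.induce S).dir a b → ¬ (M.induce S).anc b a := by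
      intro a b hab hba
      exact hM.1.1 a b hab.1 (anc_induce_mono hba)
    obtain ⟨x, hyx, hsink⟩ := exists_sink (M.induce S) acy y
    have hyS : y ∈ S := by
      rcases hzy with h | h
      · exact h.2.2
      · exact h.2.2
    have harrow : ∃ w, M.dir w x ∨ M.bi w x := by
      rcases Relation.ReflTransGen.cases_tail hyx with h | ⟨c, _, hcx⟩
      · subst h
        rcases hzy with h' | h'
        · exact ⟨z, Or.inl h'.1⟩
        · exact ⟨z, Or.inr h'.1⟩
      · exact ⟨c, Or.inl hcx.1⟩
    have hxS : x ∈ S := by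
      rcases Relation.ReflTransGen.cases_tail hyx with h | ⟨c, _, hcx⟩
      · exact h ▸ hyS
      · exact hcx.2.2
    have hallhead : ∀ a, (M.induce S).adj a x → (M.induce S).head a x := by
      intro a hadj
      rcases hadj with h | h | h | h
      · exact Or.inl h
      · exact absurd h (hsink a)
      · exact Or.inr h
      · exfalso
        have hMund : M.und x a := M.und_symm _ _ h.1
        obtain ⟨w, hw⟩ := harrow
        rcases hw with hw | hw
        · exact (hM.1.2.2 x a hMund w).1 hw
        · exact (hM.1.2.2 x a hMund w).2 hw
    exact ⟨x, hxS, removable_of_childless_allhead (M.induce S) x hsink hallhead⟩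
  · push_neg at hcase
    have hndir : ∀ a b, ¬ (M.induce S).dir a b := fun a b h => hcase b a (Or.inl h)
    have hnbi : ∀ a b, ¬ (M.induce S).bi a b := fun a b h => hcase b a (Or.inr h)
    have hch' : ∀ p : List V, 4 ≤ p.length → p.Chain' (M.induce S).und → p.Nodup →
        (∀ a b, p.head? = some a → p.getLast? = some b → (M.induce S).und b a) →
        ∃ i j a b, i + 2 ≤ j ∧ j < p.length ∧ ¬(i = 0 ∧ j + 1 = p.length) ∧
          p[i]? = some a ∧ p[j]? = some b ∧ (M.induce S).und a b := by
      intro p hlen hchn hnd hwrap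
      have hmemS : ∀ w ∈ p, w ∈ S := by
        intro w hw
        obtain ⟨k, hk, rfl⟩ := List.mem_iff_getElem.1 hw
        by_cases hk1 : k + 1 < p.length
        · have := chain'_rel hchn (List.getElem?_eq_getElem hk) (List.getElem?_eq_getElem hk1)
          exact ((induce_und M S _ _).1 this).2.1
        · have hklast : k = p.length - 1 := by omega
          obtain ⟨Yh, hYh⟩ : ∃ Yh, p.head? = some Yh := by
            cases p with
            | nil => simp at hlen
            | cons hh tt => exact ⟨hh, rfl⟩
          have hlast : p.getLast? = some p[k] := by
            rw [List.getLast?_eq_getElem?, ← hklast]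
            exact List.getElem?_eq_getElem hk
          exact ((induce_und M S _ _).1 (hwrap Yh p[k] hYh hlast)).2.1
      have hc := hchordal p hlen (hchn.imp (fun a b h => ((induce_und M S a b).1 h).1)) hnd
        (fun a b hha hlb => ((induce_und M S b a).1 (hwrap a b hha hlb)).1)
      obtain ⟨i, j, a, b, h2, hj, hExc, hia, hjb, hab⟩ := hc
      exact ⟨i, j, a, b, h2, hj, hExc, hia, hjb,
        (induce_und M S a b).2 ⟨hab, hmemS a (mem_of_get? hia), hmemS b (mem_of_get? hjb)⟩⟩
    obtain ⟨x, hxS, hsimpl⟩ := dirac (M.induce S).und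
      (fun a b h => (M.induce S).und_symm a b h) hch' S hS
    refine ⟨x, hxS, removable_of_simplicial (M.induce S) x hndir hnbi ?_⟩
    intro a c hax hcx hac hxa hxc
    have ha := (induce_und M S x a).1 hxa
    have hc2 := (induce_und M S x c).1 hxc
    exact hsimpl a c ha.2.2 hc2.2.2 hax hcx hac hxa hxc

open MixedGraph in
/-- if the edge-induced subgraph of a MAG `M` over its
undirected edges is chordal, then every induced subgraph of `M` on a nonempty
vertex set contains a removable vertex. -/
theorem stmt16 {V : Type*} [Fintype V] (M : MixedGraph V) (hM : M.IsMAG)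
    (hchordal : M.UndChordal) :
    ∀ S : Set V, S.Nonempty → ∃ x ∈ S, (M.induce S).Removable x := by
  exact stmt16_aux M hM hchordal
end

section
/- In a MAG, suppose X is a vertex with a collider path u = (Y, V₁, …, V_i, X, W₁, …, W_j, Z) on which X is a non-collider, W₁ ∈ Ch(X), and X satisfies the adjacency conditions of removability. If additionally every child of X is not a parent of any spouse of X (forced by acyclicity), then there exists a collider path between Y and Z passing only through the vertices {V₁,…,V_i, W₁,…,W_j, X}. -/
namespace MixedGraph

variable {V : Type*} {G : MixedGraph V}

lemma adj_symm {a b : V} (h : G.adj a b) : G.adj b a := by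
  rcases h with h|h|h|h
  · exact Or.inr (Or.inl h)
  · exact Or.inl h
  · exact Or.inr (Or.inr (Or.inl (G.bi_symm _ _ h)))
  · exact Or.inr (Or.inr (Or.inr (G.und_symm _ _ h)))

lemma head_adj {a b : V} (h : G.head a b) : G.adj a b := by
  rcases h with h|h
  · exact Or.inl h
  · exact Or.inr (Or.inr (Or.inl h))

lemma dir_anc {a b : V} (h : G.dir a b) : G.anc a b := Relation.ReflTransGen.single h

lemma not_head_of_anc (hA : G.Ancestral) {a b : V} (h : G.anc a b) (h2 : G.head b a) :
    False := by
  rcases h2 with h2|h2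
  · exact hA.1 b a h2 h
  · exact hA.2.1 b a h2 h

/-- triple-wise collider chain: every internal vertex receives heads from both
neighbours. -/
def CC (G : MixedGraph V) : List V → Prop
  | a :: b :: c :: t => G.head a b ∧ G.head c b ∧ G.CC (b :: c :: t)
  | _ => True

lemma cc_of_short {l : List V} (h : l.length ≤ 2) : G.CC l := by
  match l with
  | [] => trivial
  | [a] => trivial
  | [a, b] => trivial
  | a :: b :: c :: t => simp at h

lemma cc_cons_cons_cons {a b c : V} {t : List V} :
    G.CC (a :: b :: c :: t) ↔ G.head a b ∧ G.head c b ∧ G.CC (b :: c :: t) := Iff.rfl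

lemma cc_triple {l : List V} (h : G.CC l) :
    ∀ n a b c, l[n]? = some a → l[n+1]? = some b → l[n+2]? = some c →
      G.head a b ∧ G.head c b := by
  induction l with
  | nil => intro n a b c h1; simp at h1
  | cons x t ih =>
    intro n a b c h1 h2 h3
    match t with
    | [] => simp at h2
    | [y] => simp at h3
    | y :: z :: t' =>
      match n with
      | 0 =>
        simp at h1 h2 h3
        subst h1; subst h2; subst h3
        exact ⟨h.1, h.2.1⟩
      | n + 1 =>
        exact ih h.2.2 n a b c (by simpa using h1) (by simpa using h2)
          (by simpa using h3)

lemma cc_of_triple {l : List V}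
    (h : ∀ n a b c, l[n]? = some a → l[n+1]? = some b → l[n+2]? = some c →
      G.head a b ∧ G.head c b) : G.CC l := by
  induction l with
  | nil => trivial
  | cons x t ih =>
    match t with
    | [] => trivial
    | [y] => trivial
    | y :: z :: t' =>
      have h0 := h 0 x y z (by simp) (by simp) (by simp)
      refine ⟨h0.1, h0.2, ?_⟩
      exact ih fun n a b c h1 h2 h3 =>
        h (n+1) a b c (by simpa using h1) (by simpa using h2) (by simpa using h3)

lemma cc_prefix {l p : List V} (h : G.CC l) (hp : p <+: l) : G.CC p := by
  obtain ⟨s, rfl⟩ := hp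
  refine cc_of_triple fun n a b c h1 h2 h3 => ?_
  have hlen := (List.getElem?_eq_some_iff.mp h3).1
  refine cc_triple h n a b c ?_ ?_ ?_
  · rw [List.getElem?_append, if_pos (show n < p.length by omega)]; exact h1
  · rw [List.getElem?_append, if_pos (show n + 1 < p.length by omega)]; exact h2
  · rw [List.getElem?_append, if_pos (show n + 2 < p.length by omega)]; exact h3

lemma cc_suffix {l s : List V} (h : G.CC l) (hs : s <:+ l) : G.CC s := by
  obtain ⟨p, rfl⟩ := hs
  refine cc_of_triple fun n a b c h1 h2 h3 => ?_
  refine cc_triple h (p.length + n) a b c ?_ ?_ ?_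
  · rw [List.getElem?_append_right (by omega)]; simpa using h1
  · rw [show p.length + n + 1 = p.length + (n+1) by omega,
      List.getElem?_append_right (by omega)]; simpa using h2
  · rw [show p.length + n + 2 = p.length + (n+2) by omega,
      List.getElem?_append_right (by omega)]; simpa using h3

lemma cc_reverse {l : List V} (h : G.CC l) : G.CC l.reverse := by
  refine cc_of_triple fun n a b c h1 h2 h3 => ?_
  have hlen : n + 2 < l.length := by
    have := (List.getElem?_eq_some_iff.mp h3).1; simpa using this
  rw [List.getElem?_reverse (by omega)] at h3
  rw [List.getElem?_reverse (by omega)] at h2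
  rw [List.getElem?_reverse (by omega)] at h1
  have e3 : l.length - 1 - (n+2) = l.length - 3 - n := by omega
  have e2 : l.length - 1 - (n+1) = l.length - 3 - n + 1 := by omega
  have e1 : l.length - 1 - n = l.length - 3 - n + 2 := by omega
  rw [e3] at h3; rw [e2] at h2; rw [e1] at h1
  exact ⟨(cc_triple h _ c b a h3 h2 h1).2, (cc_triple h _ c b a h3 h2 h1).1⟩

lemma cc_replace_head {x a b : V} {l : List V} (h : G.CC (x :: b :: l))
    (ha : G.head a b) : G.CC (a :: b :: l) := by
  match l with
  | [] => trivial
  | c :: t => exact ⟨ha, h.2.1, h.2.2⟩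

lemma cc_replace_last {a x y : V} {xs : List V} (h : G.CC (xs ++ [a, x]))
    (hy : G.head y a) : G.CC (xs ++ [a, y]) := by
  have h1 : G.CC (x :: a :: xs.reverse) := by
    have := cc_reverse h; simpa using this
  have h2 : G.CC (y :: a :: xs.reverse) := cc_replace_head h1 hy
  have := cc_reverse h2
  simpa using this

lemma cc_glue {a b : V} {ys : List V} : ∀ (xs : List V), G.CC (xs ++ [a, b]) →
    G.CC (a :: b :: ys) → G.CC (xs ++ a :: b :: ys)
  | [], _, h2 => h2
  | [w], h1, h2 => ⟨h1.1, h1.2.1, h2⟩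
  | w :: w' :: xs, h1, h2 => by
    cases xs with
    | nil => exact ⟨h1.1, h1.2.1, cc_glue [w'] h1.2.2 h2⟩
    | cons w'' xs' => exact ⟨h1.1, h1.2.1, cc_glue (w' :: w'' :: xs') h1.2.2 h2⟩
  termination_by xs => xs.length

lemma isColliderPath_of_cc {l : List V} (hc : l.Chain' G.adj) (hn : l.Nodup)
    (hl : 2 ≤ l.length) (hcc : G.CC l) : G.IsColliderPath l := by
  refine ⟨⟨hc, hn, hl⟩, fun i h1 h2 => ?_⟩
  obtain ⟨n, rfl⟩ : ∃ n, i = n + 1 := ⟨i - 1, by omega⟩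
  have e1 : l[n]? = some l[n] := List.getElem?_eq_getElem (by omega)
  have e2 : l[n+1]? = some l[n+1] := List.getElem?_eq_getElem (by omega)
  have e3 : l[n+2]? = some l[n+2] := List.getElem?_eq_getElem (by omega)
  have hh := cc_triple hcc n _ _ _ e1 e2 e3
  exact ⟨l[n], l[n+1], l[n+2], by simpa using e1, e2, e3, hh.1, hh.2⟩

lemma cc_of_colliders {u : List V} {X : V} {k : ℕ}
    (h : ∀ i v, 1 ≤ i → i + 1 < u.length → u[i]? = some v → v ≠ X → G.ColliderAt u i)
    (hnd : u.Nodup) (hk : u[k]? = some X) (s : List V) (off : ℕ)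
    (hoff : ∀ n, n < s.length → u[off + n]? = s[n]?)
    (hint : ∀ n, 1 ≤ n → n + 1 < s.length → off + n ≠ k) : G.CC s := by
  refine cc_of_triple fun n a b c h1 h2 h3 => ?_
  have h3len := (List.getElem?_eq_some_iff.mp h3).1
  have e1 : u[off + n]? = some a := by rw [hoff n (by omega)]; exact h1
  have e2 : u[off + n + 1]? = some b := by
    rw [show off + n + 1 = off + (n+1) by omega, hoff (n+1) (by omega)]; exact h2
  have e3 : u[off + n + 2]? = some c := by
    rw [show off + n + 2 = off + (n+2) by omega, hoff (n+2) (by omega)]; exact h3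
  have hbX : b ≠ X := by
    intro hb
    subst hb
    have : off + n + 1 = k :=
      (List.getElem?_inj (List.getElem?_eq_some_iff.mp e2).1 hnd).mp (e2.trans hk.symm)
    exact hint (n+1) (by omega) (by omega) (by omega)
  have hulen : off + n + 2 < u.length := (List.getElem?_eq_some_iff.mp e3).1
  obtain ⟨a', v', c', g1, g2, g3, gh1, gh2⟩ := h (off + n + 1) b (by omega) (by omega) e2 hbX
  rw [show off + n + 1 - 1 = off + n by omega] at g1
  rw [show off + n + 1 + 1 = off + n + 2 by omega] at g3
  have ha : a' = a := by rw [g1] at e1; exact (Option.some.injEq _ _ ▸ e1 : _)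
  have hv : v' = b := by rw [g2] at e2; exact (Option.some.injEq _ _ ▸ e2 : _)
  have hc : c' = c := by rw [g3] at e3; exact (Option.some.injEq _ _ ▸ e3 : _)
  subst ha; subst hv; subst hc
  exact ⟨gh1, gh2⟩

lemma getLast?_suffix {α : Type*} {s l : List α} (h : s <:+ l) (hs : s ≠ []) :
    l.getLast? = s.getLast? := by
  obtain ⟨p, rfl⟩ := h; exact List.getLast?_append_of_ne_nil p hs

lemma run_aux (hA : G.Ancestral) {X L Z : V} {F : List V} (h2 : G.RemCond2 X)
    (hFcc : G.CC F) (hFch : F.Chain' G.adj) (hFnd : F.Nodup)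
    (hLF : L ∉ F) (hXL : G.dir X L) :
    ∀ (r p : List V) (a : V), F = p ++ [a] ++ r → p.head? = some X →
      (∀ v ∈ p ++ [a], G.dir v L) → r.getLast? = some Z →
      ∃ c t', (c :: t') <:+ r ∧ G.head c L ∧ G.CC (L :: c :: t') := by
  intro r
  induction r with
  | nil => intro p a hF hXp hPar hLast; simp at hLast
  | cons c r' ih =>
    intro p a hF hXp hPar hLast
    have hpre : (p ++ [a] ++ [c]) <+: F := ⟨r', by rw [hF]; simp⟩
    have hcp : G.IsColliderPath (p ++ [a] ++ [c]) :=
      isColliderPath_of_cc (hFch.prefix hpre) (hpre.sublist.nodup hFnd)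
        (by simp) (cc_prefix hFcc hpre)
    have hpne : p ≠ [] := by intro h; rw [h] at hXp; simp at hXp
    have hhead : (p ++ [a] ++ [c]).head? = some X := by
      rw [List.append_assoc, List.head?_append_of_ne_nil _ hpne]; exact hXp
    have hlast : (p ++ [a] ++ [c]).getLast? = some c := List.getLast?_concat
    have hLnotin : L ∉ p ++ [a] ++ [c] := fun hm => hLF (hpre.sublist.subset hm)
    have hadj : G.adj c L := by
      refine h2 _ c L hcp hhead hlast hLnotin ?_
      rw [List.dropLast_concat]; exact hPar
    rcases hadj with hd | hd | hd | hd
    · -- dir c L : head into L; either finish (r' = []) or recurse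
      cases r' with
      | nil => exact ⟨c, [], List.suffix_refl _, Or.inl hd, trivial⟩
      | cons d r'' =>
        obtain ⟨c₀, t', hsuf, hh, hcc⟩ := ih (p ++ [a]) c (by rw [hF]; simp)
          (by rw [List.head?_append_of_ne_nil _ hpne]; exact hXp)
          (by intro v hv
              rcases List.mem_append.mp hv with hv | hv
              · exact hPar v hv
              · simp at hv; subst hv; exact hd)
          (by rw [List.getLast?_cons_cons] at hLast; exact hLast)
        exact ⟨c₀, t', hsuf.trans (List.suffix_cons _ _), hh, hcc⟩
    · -- dir L c : contradiction with ancestrality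
      exfalso
      have haL : G.dir a L := hPar a (by simp)
      have hanc : G.anc a c := (dir_anc haL).trans (dir_anc hd)
      rcases p.eq_nil_or_concat with rfl | ⟨p₂, w, rfl⟩
      · exact hpne rfl
      · have hsuf2 : (w :: a :: c :: r') <:+ F := ⟨p₂, by rw [hF]; simp⟩
        have hcc2 := cc_suffix hFcc hsuf2
        exact not_head_of_anc hA hanc hcc2.2.1
    · -- bi c L : done
      refine ⟨c, r', List.suffix_refl _, Or.inr hd, ?_⟩
      cases r' with
      | nil => trivial
      | cons d r'' =>
        have hsuf2 : (a :: c :: d :: r'') <:+ F := ⟨p, by rw [hF]; simp⟩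
        have hcc2 := cc_suffix hFcc hsuf2
        exact ⟨Or.inr (G.bi_symm _ _ hd), hcc2.2.1, hcc2.2.2⟩
    · -- und c L : contradiction
      exact absurd hXL ((hA.2.2 L c (G.und_symm _ _ hd) X).1)

lemma main_aux (hA : G.Ancestral) {X Y Z W₁ : V} (h1 : G.RemCond1 X) (h2 : G.RemCond2 X)
    (hcs : ∀ c s : V, G.dir X c → G.bi X s → ¬ G.dir c s)
    (hch : G.dir X W₁) (vs ws : List V)
    (hndu : ((Y :: vs) ++ (X :: W₁ :: (ws ++ [Z]))).Nodup)
    (hchu : ((Y :: vs) ++ (X :: W₁ :: (ws ++ [Z]))).Chain' G.adj)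
    (HL : G.CC (Y :: (vs ++ [X])))
    (HR : G.CC (X :: W₁ :: (ws ++ [Z]))) :
    ∃ q : List V, q.Sublist ((Y :: vs) ++ (X :: W₁ :: (ws ++ [Z]))) ∧
      q.Chain' G.adj ∧ G.CC q ∧ q.head? = some Y ∧ q.getLast? = some Z := by
  have hdisj : (Y :: vs).Disjoint (X :: W₁ :: (ws ++ [Z])) :=
    (List.nodup_append'.mp hndu).2.2
  have hndFR : (X :: W₁ :: (ws ++ [Z])).Nodup := (List.nodup_append'.mp hndu).2.1
  have hchFR : (X :: W₁ :: (ws ++ [Z])).Chain' G.adj :=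
    hchu.suffix (List.suffix_append _ _)
  have hlastwZ : (ws ++ [Z]).getLast? = some Z := List.getLast?_concat
  have hW₁FR : W₁ ∈ X :: W₁ :: (ws ++ [Z]) := by simp
  have hundW₁ : ∀ v, G.und v W₁ → False := fun v hu =>
    (hA.2.2 W₁ v (G.und_symm _ _ hu) X).1 hch
  rcases vs.eq_nil_or_concat with rfl | ⟨vs', Vi, hvs⟩
  · -- vs = [] : junction between Y and W₁
    have hchu' : (Y :: X :: W₁ :: (ws ++ [Z])).Chain' G.adj := by simpa using hchu
    have hadjYX : G.adj Y X := (List.isChain_cons_cons.mp hchu').1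
    have hYFR : Y ∉ X :: W₁ :: (ws ++ [Z]) := fun h => hdisj (by simp) h
    have hneWY : W₁ ≠ Y := fun h => hYFR (h ▸ hW₁FR)
    have hadjYW : G.adj Y W₁ := h1 Y W₁ (adj_symm hadjYX) (Or.inl hch) hneWY
    have hcase : G.head Y W₁ ∨ G.dir W₁ Y := by
      rcases hadjYW with hd | hd | hd | hd
      · exact Or.inl (Or.inl hd)
      · exact Or.inr hd
      · exact Or.inl (Or.inr hd)
      · exact absurd hd (fun h => hundW₁ Y h)
    rcases hcase with hd | hd
    · -- direct path Y, W₁, ..., Z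
      refine ⟨Y :: W₁ :: (ws ++ [Z]), ?_, ?_, cc_replace_head HR hd, rfl, ?_⟩
      · simpa using (List.sublist_cons_self X (W₁ :: (ws ++ [Z]))).cons₂ Y
      · exact List.isChain_cons_cons.mpr ⟨head_adj hd, hchFR.suffix (List.suffix_cons _ _)⟩
      · rw [show Y :: W₁ :: (ws ++ [Z]) = (Y :: W₁ :: ws) ++ [Z] by simp]
        exact List.getLast?_concat
    · -- dir W₁ Y : rightward run with L = Y
      have hancXY : G.anc X Y := (dir_anc hch).trans (dir_anc hd)
      have hdXY : G.dir X Y := by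
        rcases hadjYX with h | h | h | h
        · exact absurd hancXY (hA.1 Y X h)
        · exact h
        · exact absurd hancXY (hA.2.1 Y X h)
        · exact absurd hd ((hA.2.2 Y X h W₁).1)
      obtain ⟨c, t', hsuf, hh, hcc⟩ :=
        run_aux hA h2 HR hchFR hndFR hYFR hdXY (ws ++ [Z]) [X] W₁ (by simp) rfl
          (by intro v hv
              simp at hv
              rcases hv with rfl | rfl
              · exact hdXY
              · exact hd)
          hlastwZ
      have hsufu : (c :: t') <:+ X :: W₁ :: (ws ++ [Z]) :=
        hsuf.trans ⟨[X, W₁], by simp⟩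
      refine ⟨Y :: c :: t', ?_, ?_, hcc, rfl, ?_⟩
      · simpa using (hsufu.sublist).cons₂ Y
      · exact List.isChain_cons_cons.mpr ⟨adj_symm (head_adj hh), hchFR.suffix hsufu⟩
      · rw [List.getLast?_cons_cons, ← getLast?_suffix hsuf (by simp)]
        exact hlastwZ
  · -- vs = vs' ++ [Vi]
    rw [List.concat_eq_append] at hvs
    subst hvs
    have hViY : Vi ∈ Y :: (vs' ++ [Vi]) := by simp
    have hViFR : Vi ∉ X :: W₁ :: (ws ++ [Z]) := fun h => hdisj hViY h
    have hneWVi : W₁ ≠ Vi := fun h => hViFR (h ▸ hW₁FR)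
    -- head X Vi
    have hHL' : G.CC ((Y :: vs') ++ [Vi, X]) := by
      have : Y :: ((vs' ++ [Vi]) ++ [X]) = (Y :: vs') ++ [Vi, X] := by simp
      rw [← this]; exact HL
    have hXVi : G.head X Vi := by
      rcases (Y :: vs').eq_nil_or_concat with h | ⟨front, w, hfw⟩
      · simp at h
      · rw [List.concat_eq_append] at hfw
        have hsufL : [w, Vi, X] <:+ (Y :: vs') ++ [Vi, X] := ⟨front, by rw [hfw]; simp⟩
        exact (cc_suffix hHL' hsufL).2.1
    have hadjVW : G.adj Vi W₁ := h1 Vi W₁ (head_adj hXVi) (Or.inl hch) hneWVi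
    -- chain' on the left part, giving junction adjacency
    have hchL : ((Y :: vs') ++ [Vi]).Chain' G.adj :=
      hchu.prefix ⟨X :: W₁ :: (ws ++ [Z]), by simp⟩
    have hjun := (List.isChain_append.mp hchL).2.2
    rcases hadjVW with hd | hd | hd | hd
    · -- dir Vi W₁ : leftward run with L = W₁
      have hFLcc : G.CC (X :: Vi :: (Y :: vs').reverse) := by
        have := cc_reverse HL
        simpa using this
      have hFLch : (X :: Vi :: (Y :: vs').reverse).Chain' G.adj := by
        have hpre : (Y :: (vs' ++ [Vi]) ++ [X]).Chain' G.adj :=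
          hchu.prefix ⟨W₁ :: (ws ++ [Z]), by simp⟩
        have := (List.isChain_reverse (R := G.adj)).mpr (hpre.imp fun a b h => adj_symm h)
        simpa [List.Chain'] using this
      have hFLnd : (X :: Vi :: (Y :: vs').reverse).Nodup := by
        have hpre : (Y :: (vs' ++ [Vi]) ++ [X]).Sublist
            ((Y :: (vs' ++ [Vi])) ++ (X :: W₁ :: (ws ++ [Z]))) := by
          refine List.Sublist.append_left ?_ _
          exact (List.nil_sublist _).cons₂ X
        have := hpre.nodup hndu
        have h2 := List.nodup_reverse.mpr this
        simpa [List.reverse_append] using h2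
      have hWX : W₁ ≠ X := by
        intro h
        exact (List.nodup_cons.mp hndFR).1 (by rw [← h]; simp)
      have hWVi : W₁ ≠ Vi := hneWVi
      have hWFL : W₁ ∉ X :: Vi :: (Y :: vs').reverse := by
        intro hm
        refine hdisj ?_ hW₁FR
        simp only [List.mem_cons, List.mem_reverse] at hm
        simp only [List.mem_cons, List.mem_append]
        tauto
      obtain ⟨c, t', hsuf, hh, hcc⟩ :=
        run_aux hA h2 hFLcc hFLch hFLnd hWFL hch ((Y :: vs').reverse) [X] Vi (by simp) rfl
          (by intro v hv
              simp at hv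
              rcases hv with rfl | rfl
              · exact hch
              · exact hd)
          (by rw [List.getLast?_reverse]; rfl)
      -- q = (c :: t').reverse ++ W₁ :: (ws ++ [Z])
      obtain ⟨pre, hpre⟩ := hsuf
      have hrevpre : (c :: t').reverse <+: (Y :: vs') := by
        refine ⟨pre.reverse, ?_⟩
        have := congrArg List.reverse hpre
        simpa using this
      refine ⟨(c :: t').reverse ++ (W₁ :: (ws ++ [Z])), ?_, ?_, ?_, ?_, ?_⟩
      · rw [show (Y :: (vs' ++ [Vi])) ++ (X :: W₁ :: (ws ++ [Z]))
            = (Y :: (vs' ++ [Vi])) ++ (X :: W₁ :: (ws ++ [Z])) from rfl]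
        refine List.Sublist.append ?_ (List.sublist_cons_self X _)
        exact hrevpre.sublist.trans (by
          have : (Y :: vs') <+: (Y :: (vs' ++ [Vi])) := ⟨[Vi], by simp⟩
          exact this.sublist)
      · refine List.isChain_append.mpr ⟨?_, hchFR.suffix (List.suffix_cons _ _), ?_⟩
        · have hchYv : (Y :: vs').Chain' G.adj :=
            hchu.prefix ⟨(Vi :: X :: W₁ :: (ws ++ [Z])), by simp⟩
          have hchct : ((c :: t')).Chain' G.adj := by
            have hrev : ((Y :: vs').reverse).Chain' G.adj := by
              have := (List.isChain_reverse (R := G.adj)).mpr (hchYv.imp fun a b h => adj_symm h)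
              simpa [List.Chain'] using this
            exact hrev.suffix ⟨pre, hpre⟩
          have := List.isChain_reverse.mpr (hchct.imp fun a b h => adj_symm h)
          simpa using this
        · intro x hx y hy
          rw [List.getLast?_reverse] at hx
          simp at hx hy
          subst hx; subst hy
          exact head_adj hh
      · have hccrev : G.CC (t'.reverse ++ [c, W₁]) := by
          have := cc_reverse hcc
          simpa using this
        have hccright : G.CC (c :: W₁ :: (ws ++ [Z])) := cc_replace_head HR hh
        have := cc_glue t'.reverse hccrev hccright
        simpa using this
      · rw [List.head?_append_of_ne_nil _ (by simp), List.head?_reverse]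
        rw [← getLast?_suffix ⟨pre, hpre⟩ (by simp), List.getLast?_reverse]
        rfl
      · rw [List.getLast?_append_of_ne_nil _ (by simp),
          show W₁ :: (ws ++ [Z]) = (W₁ :: ws) ++ [Z] by simp]
        exact List.getLast?_concat
    · -- dir W₁ Vi : rightward run with L = Vi
      have hdXVi : G.dir X Vi := by
        rcases hXVi with h | h
        · exact h
        · exact absurd hd (hcs W₁ Vi hch h)
      obtain ⟨c, t', hsuf, hh, hcc⟩ :=
        run_aux hA h2 HR hchFR hndFR hViFR hdXVi (ws ++ [Z]) [X] W₁ (by simp) rfl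
          (by intro v hv
              simp at hv
              rcases hv with rfl | rfl
              · exact hdXVi
              · exact hd)
          hlastwZ
      have hsufu : (c :: t') <:+ X :: W₁ :: (ws ++ [Z]) := hsuf.trans ⟨[X, W₁], by simp⟩
      refine ⟨(Y :: vs') ++ (Vi :: c :: t'), ?_, ?_, ?_, ?_, ?_⟩
      · rw [show (Y :: (vs' ++ [Vi])) ++ (X :: W₁ :: (ws ++ [Z]))
            = (Y :: vs') ++ (Vi :: X :: W₁ :: (ws ++ [Z])) by simp]
        refine List.Sublist.append_left ?_ _
        exact (hsufu.sublist).cons₂ Vi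
      · refine List.isChain_append.mpr ⟨hchu.prefix ⟨Vi :: X :: W₁ :: (ws ++ [Z]), by simp⟩,
          ?_, ?_⟩
        · exact List.isChain_cons_cons.mpr ⟨adj_symm (head_adj hh), hchFR.suffix hsufu⟩
        · intro x hx y hy
          simp at hy
          subst hy
          exact hjun x (by simpa using hx) Vi (by simp)
      · exact cc_glue (Y :: vs') (cc_replace_last hHL' hh) hcc
      · rw [List.head?_append_of_ne_nil _ (by simp)]; rfl
      · rw [List.getLast?_append_of_ne_nil _ (by simp), List.getLast?_cons_cons,
          ← getLast?_suffix hsuf (by simp)]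
        exact hlastwZ
    · -- bi Vi W₁ : direct bridge
      refine ⟨(Y :: vs') ++ (Vi :: W₁ :: (ws ++ [Z])), ?_, ?_, ?_, ?_, ?_⟩
      · rw [show (Y :: (vs' ++ [Vi])) ++ (X :: W₁ :: (ws ++ [Z]))
            = (Y :: vs') ++ (Vi :: X :: W₁ :: (ws ++ [Z])) by simp]
        refine List.Sublist.append_left ?_ _
        exact (List.sublist_cons_self X _).cons₂ Vi
      · refine List.isChain_append.mpr ⟨hchu.prefix ⟨Vi :: X :: W₁ :: (ws ++ [Z]), by simp⟩,
          ?_, ?_⟩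
        · exact List.isChain_cons_cons.mpr ⟨head_adj (Or.inr hd : G.head Vi W₁),
            hchFR.suffix (List.suffix_cons _ _)⟩
        · intro x hx y hy
          simp at hy
          subst hy
          exact hjun x (by simpa using hx) Vi (by simp)
      · exact cc_glue (Y :: vs')
          (cc_replace_last hHL' (Or.inr (G.bi_symm _ _ hd)))
          (cc_replace_head HR (Or.inr hd))
      · rw [List.head?_append_of_ne_nil _ (by simp)]; rfl
      · rw [List.getLast?_append_of_ne_nil _ (by simp),
          show Vi :: W₁ :: (ws ++ [Z]) = (Vi :: W₁ :: ws) ++ [Z] by simp]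
        exact List.getLast?_concat
    · -- und Vi W₁ : impossible
      exact absurd hd (fun h => hundW₁ Vi h)

end MixedGraph

open MixedGraph in
/-- suppose `u = (Y, V₁, …, V_i, X, W₁, …, W_j, Z)` is a path in
a MAG whose non-endpoint vertices other than `X` are all colliders, `X` is a
non-collider on `u`, `W₁` is a child of `X`, `X` satisfies the adjacency
conditions of removability, and no child of `X` is a parent of a spouse of
`X`. Then there is a collider path between `Y` and `Z` passing only through
the vertices `{V₁, …, V_i, W₁, …, W_j, X}`. -/
theorem stmt17 {V : Type*} (G : MixedGraph V) (hG : G.IsMAG)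
    (vs ws : List V) (X Y Z W₁ : V)
    (hpath : G.IsPath ((Y :: vs) ++ (X :: W₁ :: ws) ++ [Z]))
    (hcol : ∀ i v, 1 ≤ i → i + 1 < ((Y :: vs) ++ (X :: W₁ :: ws) ++ [Z]).length →
      ((Y :: vs) ++ (X :: W₁ :: ws) ++ [Z])[i]? = some v → v ≠ X →
      G.ColliderAt ((Y :: vs) ++ (X :: W₁ :: ws) ++ [Z]) i)
    (hXnc : ¬ G.ColliderAt ((Y :: vs) ++ (X :: W₁ :: ws) ++ [Z]) (vs.length + 1))
    (hch : G.dir X W₁)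
    (h1 : G.RemCond1 X) (h2 : G.RemCond2 X)
    (hcs : ∀ c s : V, G.dir X c → G.bi X s → ¬ G.dir c s) :
    ∃ q : List V, G.IsColliderPath q ∧ q.head? = some Y ∧
      q.getLast? = some Z ∧
      ∀ v ∈ q, v = Y ∨ v = Z ∨ v = X ∨ v ∈ vs ∨ v = W₁ ∨ v ∈ ws := by
  obtain ⟨hA, _⟩ := hG
  obtain ⟨hchu, hndu, _⟩ := hpath
  have hshape : (Y :: vs) ++ (X :: W₁ :: ws) ++ [Z]
      = (Y :: vs) ++ (X :: W₁ :: (ws ++ [Z])) := by simp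
  rw [hshape] at hchu hndu hcol
  have hshape2 : (Y :: vs) ++ (X :: W₁ :: (ws ++ [Z]))
      = (Y :: (vs ++ [X])) ++ (W₁ :: (ws ++ [Z])) := by simp
  have hkX : ((Y :: vs) ++ (X :: W₁ :: (ws ++ [Z])))[vs.length + 1]? = some X := by
    rw [List.getElem?_append_right (by simp)]
    simp
  have HR : G.CC (X :: W₁ :: (ws ++ [Z])) := by
    refine cc_of_colliders hcol hndu hkX _ (vs.length + 1) ?_ ?_
    · intro n hn
      rw [List.getElem?_append_right (by simp only [List.length_cons]; omega)]
      congr 1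
      simp
    · intro n h1n h2n
      omega
  have HL : G.CC (Y :: (vs ++ [X])) := by
    refine cc_of_colliders hcol hndu hkX _ 0 ?_ ?_
    · intro n hn
      rw [hshape2, List.getElem?_append, if_pos (by simpa using hn)]
      simp
    · intro n h1n h2n
      simp at h2n
      omega
  obtain ⟨q, hsub, hchq, hccq, hhq, hlq⟩ :=
    main_aux hA h1 h2 hcs hch vs ws hndu hchu HL HR
  have hYZ : Y ≠ Z := by
    intro h
    exact (List.nodup_append'.mp hndu).2.2 (show Y ∈ Y :: vs by simp) (by simp [h])
  have hlen2 : 2 ≤ q.length := by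
    match q, hhq, hlq with
    | [], h, _ => simp at h
    | [x], h, h' =>
      simp at h h'
      exact absurd (h.symm.trans h') hYZ
    | x :: y :: t, _, _ => simp
  refine ⟨q, isColliderPath_of_cc hchq (hsub.nodup hndu) hlen2 hccq, hhq, hlq, ?_⟩
  intro v hv
  have hvu := hsub.subset hv
  simp at hvu
  tauto
end
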